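/- arXiv:1010.3194 — 5 statements merged into one kernel-verified Lean document; each statement's English description precedes it below -/
import Mathlib

section
/- Let I be a squarefree monomial ideal of S and let L be its squarefree lexification. Then L ⊆ (x_1) if and only if I ⊆ (x_i) for some variable x_i. -/
open MvPolynomial

/-- `m₁·W`: the `k`-span of `{xᵢ·w : 1 ≤ i ≤ n, w ∈ W}`. -/
noncomputable def mulVars (k : Type*) [Field k] {n : ℕ}
    (W : Submodule k (MvPolynomial (Fin n) k)) : Submodule k (MvPolynomial (Fin n) k) :=
  Submodule.span k {p : MvPolynomial (Fin n) k | ∃ i : Fin n, ∃ w ∈ W, p = X i * w}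

/-- A subspace `V ⊆ S_d` is Gotzmann if `dim m₁·V ≤ dim m₁·W` for every subspace
`W ⊆ S_d` with `dim W = dim V`. -/
def IsGotzmannSubspace (k : Type*) [Field k] (n d : ℕ)
    (V : Submodule k (MvPolynomial (Fin n) k)) : Prop :=
  V ≤ homogeneousSubmodule (Fin n) k d ∧
    ∀ W : Submodule k (MvPolynomial (Fin n) k),
      W ≤ homogeneousSubmodule (Fin n) k d →
      Module.finrank k W = Module.finrank k V →
      Module.finrank k (mulVars k V) ≤ Module.finrank k (mulVars k W)

/-- The degree-`d` component `I_d` of an ideal, as a `k`-subspace of `S_d`. -/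
noncomputable def idealComponent (k : Type*) [Field k] {n : ℕ}
    (I : Ideal (MvPolynomial (Fin n) k)) (d : ℕ) : Submodule k (MvPolynomial (Fin n) k) :=
  Submodule.restrictScalars k I ⊓ homogeneousSubmodule (Fin n) k d

/-- An ideal is Gotzmann if all of its graded components are Gotzmann subspaces. -/
def IsGotzmannIdeal {k : Type*} [Field k] {n : ℕ}
    (I : Ideal (MvPolynomial (Fin n) k)) : Prop :=
  ∀ d : ℕ, IsGotzmannSubspace k n d (idealComponent k I d)

/-- The squarefree monomial `∏_{i ∈ A} xᵢ` with support `A`. -/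
noncomputable def sqMonomial (k : Type*) [Field k] {n : ℕ} (A : Finset (Fin n)) :
    MvPolynomial (Fin n) k :=
  ∏ i ∈ A, X i

/-- A squarefree monomial ideal: an ideal generated by squarefree monomials
(equivalently, a monomial ideal whose minimal monomial generators are squarefree). -/
def IsSquarefreeMonomialIdeal {k : Type*} [Field k] {n : ℕ}
    (I : Ideal (MvPolynomial (Fin n) k)) : Prop :=
  ∃ G : Set (Finset (Fin n)), I = Ideal.span (sqMonomial k '' G)

/-- Lex comparison of exponent vectors with `x₁ > x₂ > ⋯ > xₙ`: `s` is lex-smaller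
than `t` iff at the first index where they differ, `s` has the smaller exponent. -/
def expLexLT {n : ℕ} (s t : Fin n →₀ ℕ) : Prop :=
  ∃ i : Fin n, (∀ j : Fin n, j < i → s j = t j) ∧ s i < t i

/-- A lex segment in `S_d`: the span of a set of degree-`d` monomials which is closed
under passing to lex-larger degree-`d` monomials. -/
def IsLexSegment (k : Type*) [Field k] {n : ℕ} (d : ℕ)
    (L : Submodule k (MvPolynomial (Fin n) k)) : Prop :=
  ∃ B : Set (Fin n →₀ ℕ),
    (∀ s ∈ B, (s.sum fun _ e => e) = d) ∧
    (∀ s ∈ B, ∀ t : Fin n →₀ ℕ, (t.sum fun _ e => e) = d → expLexLT s t → t ∈ B) ∧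
    L = Submodule.span k ((fun s => (monomial s (1 : k) : MvPolynomial (Fin n) k)) '' B)

/-- A monomial vector space: a subspace of `S_d` spanned by monomials of degree `d`. -/
def IsMonomialSubspace (k : Type*) [Field k] {n : ℕ} (d : ℕ)
    (V : Submodule k (MvPolynomial (Fin n) k)) : Prop :=
  ∃ B : Set (Fin n →₀ ℕ),
    (∀ s ∈ B, (s.sum fun _ e => e) = d) ∧
    V = Submodule.span k ((fun s => (monomial s (1 : k) : MvPolynomial (Fin n) k)) '' B)

/-- A homogeneous ideal: one containing all homogeneous components of its elements. -/
def IsHomogeneousIdeal {k : Type*} [Field k] {n : ℕ}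
    (I : Ideal (MvPolynomial (Fin n) k)) : Prop :=
  ∀ p ∈ I, ∀ d : ℕ, (homogeneousComponent d p) ∈ I

/-- A lex ideal: each graded component is a lex segment. -/
def IsLexIdeal (k : Type*) [Field k] {n : ℕ}
    (I : Ideal (MvPolynomial (Fin n) k)) : Prop :=
  ∀ d : ℕ, IsLexSegment k d (idealComponent k I d)

/-- `A` lex-precedes `B`, as squarefree monomials with `x₁ > x₂ > ⋯ > xₙ`: the
least element of the symmetric difference `A Δ B` lies in `A`. -/
def finsetLexLT {n : ℕ} (A B : Finset (Fin n)) : Prop :=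
  ∃ i ∈ A, i ∉ B ∧ ∀ j : Fin n, j < i → (j ∈ A ↔ j ∈ B)

/-- `L` is the squarefree lexification of `I`: `L` is a squarefree monomial ideal and,
in each degree `d`, the squarefree degree-`d` monomials in `L` form an initial segment
in lex order whose cardinality is the number of squarefree degree-`d` monomials in `I`. -/
def IsSquarefreeLexification (k : Type*) [Field k] {n : ℕ}
    (I L : Ideal (MvPolynomial (Fin n) k)) : Prop :=
  IsSquarefreeMonomialIdeal L ∧
    ∀ d : ℕ,
      (∀ B : Finset (Fin n), B.card = d → sqMonomial k B ∈ L →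
        ∀ A : Finset (Fin n), A.card = d → finsetLexLT A B → sqMonomial k A ∈ L) ∧
      {A : Finset (Fin n) | A.card = d ∧ sqMonomial k A ∈ L}.ncard
        = {A : Finset (Fin n) | A.card = d ∧ sqMonomial k A ∈ I}.ncard

/-- `A` is the support of a minimal monomial generator of the squarefree monomial
ideal `I`: the monomial `x_A` lies in `I` but no proper divisor of it does. -/
def IsMinimalSqGenerator {k : Type*} [Field k] {n : ℕ}
    (I : Ideal (MvPolynomial (Fin n) k)) (A : Finset (Fin n)) : Prop :=
  sqMonomial k A ∈ I ∧ ∀ B : Finset (Fin n), B ⊂ A → sqMonomial k B ∉ I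

-- Auxiliary lemmas
noncomputable def sqExp {n : ℕ} (A : Finset (Fin n)) : Fin n →₀ ℕ :=
  ∑ i ∈ A, Finsupp.single i 1

lemma sqExp_apply {n : ℕ} (A : Finset (Fin n)) (i : Fin n) :
    sqExp A i = if i ∈ A then 1 else 0 := by
  classical
  rw [sqExp, Finset.sum_apply']
  simp [Finsupp.single_apply]

lemma sqMonomial_eq_monomial (k : Type*) [Field k] {n : ℕ} (A : Finset (Fin n)) :
    sqMonomial k A = monomial (sqExp A) 1 := by
  classical
  induction A using Finset.induction with
  | empty => simp [sqMonomial, sqExp]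
  | @insert a A ha ih =>
    rw [sqMonomial, Finset.prod_insert ha, ← sqMonomial, ih]
    have : sqExp (insert a A) = Finsupp.single a 1 + sqExp A := by
      rw [sqExp, Finset.sum_insert ha]; rfl
    rw [this, X, monomial_mul, one_mul]

lemma mem_of_sqMonomial_mem_span_X {k : Type*} [Field k] {n : ℕ} {A : Finset (Fin n)}
    {i : Fin n} (h : sqMonomial k A ∈ Ideal.span {(X i : MvPolynomial (Fin n) k)}) :
    i ∈ A := by
  by_contra hi
  rw [Ideal.mem_span_singleton] at h
  obtain ⟨q, hq⟩ := h
  have := congrArg (eval (fun j => if j = i then (0 : k) else 1)) hq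
  rw [sqMonomial, eval_prod, eval_mul, eval_X, if_pos rfl, zero_mul] at this
  rw [Finset.prod_eq_one (fun j hj => by
    rw [eval_X, if_neg (by rintro rfl; exact hi hj)])] at this
  exact one_ne_zero this

lemma sqMonomial_mem_span_X {k : Type*} [Field k] {n : ℕ} {A : Finset (Fin n)}
    {i : Fin n} (h : i ∈ A) :
    sqMonomial k A ∈ Ideal.span {(X i : MvPolynomial (Fin n) k)} := by
  rw [Ideal.mem_span_singleton]
  exact Finset.dvd_prod_of_mem _ h

lemma exists_gen_of_mem {k : Type*} [Field k] {n : ℕ} {G : Set (Finset (Fin n))}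
    {p : MvPolynomial (Fin n) k} (hp : p ∈ Ideal.span (sqMonomial k '' G))
    {s : Fin n →₀ ℕ} (hs : s ∈ p.support) :
    ∃ A ∈ G, ∀ j ∈ A, s j ≠ 0 := by
  have himg : sqMonomial k '' G = (fun s => monomial s (1 : k)) '' (sqExp '' G) := by
    rw [Set.image_image]
    exact Set.image_congr fun A _ => sqMonomial_eq_monomial k A
  rw [himg, mem_ideal_span_monomial_image] at hp
  obtain ⟨si, ⟨A, hA, rfl⟩, hle⟩ := hp s hs
  refine ⟨A, hA, fun j hj => ?_⟩
  have h1 : sqExp A j ≤ s j := hle j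
  rw [sqExp_apply, if_pos hj] at h1
  omega

/-- **Lemma.** Let `I` be a squarefree monomial ideal of `S` and `L` its squarefree
lexification.  Then `L ⊆ (x₁)` if and only if `I ⊆ (xᵢ)` for some variable `xᵢ`. -/
theorem sqfLexification_le_x1_iff {k : Type*} [Field k] {n : ℕ} (hn : 0 < n)
    (I L : Ideal (MvPolynomial (Fin n) k))
    (hsf : IsSquarefreeMonomialIdeal I) (hlex : IsSquarefreeLexification k I L) :
    L ≤ Ideal.span {(X (⟨0, hn⟩ : Fin n) : MvPolynomial (Fin n) k)} ↔
      ∃ i : Fin n, I ≤ Ideal.span {(X i : MvPolynomial (Fin n) k)} := by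
  classical
  set i0 : Fin n := ⟨0, hn⟩ with hi0
  constructor
  · -- contrapositive
    intro hL
    by_contra hcon
    push_neg at hcon
    obtain ⟨G, hG⟩ := hsf
    -- every sqMonomial of univ.erase i lies in I
    have key : ∀ i : Fin n, sqMonomial k (Finset.univ.erase i) ∈ I := by
      intro i
      obtain ⟨p, hpI, hpX⟩ := SetLike.not_le_iff_exists.mp (hcon i)
      -- find s in support of p with s i = 0
      have : ¬ ∀ m ∈ p.support, ∃ j ∈ ({i} : Set (Fin n)), (m : Fin n →₀ ℕ) j ≠ 0 := by
        intro hall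
        apply hpX
        rw [show ({(X i : MvPolynomial (Fin n) k)} : Set _) = X '' ({i} : Set (Fin n)) by
          rw [Set.image_singleton]]
        exact mem_ideal_span_X_image.mpr hall
      push_neg at this
      obtain ⟨s, hs, hsi⟩ := this
      have hsi0 : s i = 0 := hsi i rfl
      rw [hG] at hpI
      obtain ⟨A, hA, hAs⟩ := exists_gen_of_mem hpI hs
      have hiA : i ∉ A := fun h => hAs i h hsi0
      have hsub : A ⊆ Finset.univ.erase i := fun j hj =>
        Finset.mem_erase.mpr ⟨fun he => hiA (he ▸ hj), Finset.mem_univ j⟩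
      have hprod : sqMonomial k (Finset.univ.erase i \ A) * sqMonomial k A
          = sqMonomial k (Finset.univ.erase i) := Finset.prod_sdiff hsub
      rw [← hprod]
      exact Ideal.mul_mem_left _ _ (hG ▸ Ideal.subset_span ⟨A, hA, rfl⟩)
    -- every (n-1)-subset monomial lies in I
    have hfull : {A : Finset (Fin n) | A.card = n - 1} ⊆
        {A : Finset (Fin n) | A.card = n - 1 ∧ sqMonomial k A ∈ I} := by
      intro A hA
      have hAcard : A.card = n - 1 := hA
      refine ⟨hAcard, ?_⟩
      have hAne : A ≠ Finset.univ := by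
        intro h
        have h2 : Finset.univ.card = n - 1 := h ▸ hAcard
        rw [Finset.card_univ, Fintype.card_fin] at h2
        omega
      obtain ⟨i, hi⟩ : ∃ i, i ∉ A := by
        by_contra h
        push_neg at h
        exact hAne (Finset.eq_univ_iff_forall.mpr h)
      have hsub : A ⊆ Finset.univ.erase i := fun j hj =>
        Finset.mem_erase.mpr ⟨fun he => hi (he ▸ hj), Finset.mem_univ j⟩
      have hcard : (Finset.univ.erase i).card = n - 1 := by
        rw [Finset.card_erase_of_mem (Finset.mem_univ i), Finset.card_univ, Fintype.card_fin]
      have : A = Finset.univ.erase i :=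
        Finset.eq_of_subset_of_card_le hsub (by rw [hcard, hAcard])
      rw [this]
      exact key i
    have hTI : {A : Finset (Fin n) | A.card = n - 1 ∧ sqMonomial k A ∈ I}
        = {A : Finset (Fin n) | A.card = n - 1} :=
      Set.Subset.antisymm (fun A hA => hA.1) hfull
    have hTL : {A : Finset (Fin n) | A.card = n - 1 ∧ sqMonomial k A ∈ L}
        = {A : Finset (Fin n) | A.card = n - 1} := by
      apply Set.eq_of_subset_of_ncard_le (fun A hA => hA.1)
      rw [← hTI, ← (hlex.2 (n - 1)).2]
    have hmem : Finset.univ.erase i0 ∈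
        {A : Finset (Fin n) | A.card = n - 1 ∧ sqMonomial k A ∈ L} := by
      rw [hTL]
      show (Finset.univ.erase i0).card = n - 1
      rw [Finset.card_erase_of_mem (Finset.mem_univ i0), Finset.card_univ, Fintype.card_fin]
    have := mem_of_sqMonomial_mem_span_X (hL hmem.2)
    exact (Finset.mem_erase.mp this).1 rfl
  · rintro ⟨i, hIi⟩
    obtain ⟨Gl, hGL⟩ := hlex.1
    rw [hGL, Ideal.span_le]
    rintro _ ⟨A, hA, rfl⟩
    by_contra h0'
    have h0 : i0 ∉ A := by
      intro h
      exact h0' (sqMonomial_mem_span_X h)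
    have hAL : sqMonomial k A ∈ L := hGL ▸ Ideal.subset_span ⟨A, hA, rfl⟩
    set d := A.card with hd
    set U : Set (Finset (Fin n)) := {B | B.card = d ∧ i0 ∈ B} with hU
    set U' : Set (Finset (Fin n)) := {B | B.card = d ∧ i ∈ B} with hU'
    -- insert A U ⊆ T_L
    have hUL : insert A U ⊆ {B : Finset (Fin n) | B.card = d ∧ sqMonomial k B ∈ L} := by
      rintro B (rfl | hB)
      · exact ⟨rfl, hAL⟩
      · refine ⟨hB.1, (hlex.2 d).1 A rfl hAL B hB.1 ?_⟩
        refine ⟨i0, hB.2, h0, fun j hj => absurd (Fin.lt_def.mp hj) (by simp [hi0])⟩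
    have hTIU' : {B : Finset (Fin n) | B.card = d ∧ sqMonomial k B ∈ I} ⊆ U' :=
      fun B hB => ⟨hB.1, mem_of_sqMonomial_mem_span_X (hIi hB.2)⟩
    -- ncard U = ncard U' via swap
    have himg : (fun B : Finset (Fin n) => B.map (Equiv.swap i0 i).toEmbedding) '' U' = U := by
      ext B
      constructor
      · rintro ⟨C, ⟨hCd, hiC⟩, rfl⟩
        refine ⟨by rw [Finset.card_map]; exact hCd, ?_⟩
        exact Finset.mem_map.mpr ⟨i, hiC, Equiv.swap_apply_right i0 i⟩
      · rintro ⟨hBd, hiB⟩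
        refine ⟨B.map (Equiv.swap i0 i).toEmbedding,
          ⟨by rw [Finset.card_map]; exact hBd,
           Finset.mem_map.mpr ⟨i0, hiB, Equiv.swap_apply_left i0 i⟩⟩, ?_⟩
        ext a
        simp only [Finset.mem_map, Equiv.coe_toEmbedding]
        constructor
        · rintro ⟨b, ⟨c, hc, rfl⟩, rfl⟩
          rwa [Equiv.swap_apply_self]
        · intro ha
          exact ⟨Equiv.swap i0 i a, ⟨a, ha, rfl⟩, Equiv.swap_apply_self i0 i a⟩
    have hUU' : U'.ncard = U.ncard := by
      rw [← himg]
      exact (Set.ncard_image_of_injective U'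
        (Finset.map_injective (Equiv.swap i0 i).toEmbedding)).symm
    have hAnotU : A ∉ U := fun h => h0 h.2
    have h1 : (insert A U).ncard ≤
        {B : Finset (Fin n) | B.card = d ∧ sqMonomial k B ∈ L}.ncard :=
      Set.ncard_le_ncard hUL (Set.toFinite _)
    have h2 : (insert A U).ncard = U.ncard + 1 :=
      Set.ncard_insert_of_notMem hAnotU (Set.toFinite U)
    have h3 := (hlex.2 d).2
    have h4 : {B : Finset (Fin n) | B.card = d ∧ sqMonomial k B ∈ I}.ncard ≤ U'.ncard :=
      Set.ncard_le_ncard hTIU' (Set.toFinite _)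
    omega
end

section
/- Let I be a Gotzmann squarefree monomial ideal of S with I ⊆ (x_i) for some variable x_i. Then the colon ideal (I : x_i) = {f ∈ S : x_i·f ∈ I} — equivalently, the ideal generated by m/x_i as m ranges over the minimal monomial generators of I — is a Gotzmann squarefree monomial ideal of S. -/
open MvPolynomial

section AuxColon

variable {k : Type*} [Field k] {n : ℕ}

private lemma aux_hom_mul_X (i : Fin n) {d : ℕ} {w : MvPolynomial (Fin n) k}
    (hw : w ∈ homogeneousSubmodule (Fin n) k d) :
    X i * w ∈ homogeneousSubmodule (Fin n) k (d + 1) := by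
  rw [mem_homogeneousSubmodule] at hw ⊢
  simpa [add_comm] using (isHomogeneous_X k i).mul hw

private lemma aux_hom_of_X_mul (i : Fin n) {d : ℕ} {g : MvPolynomial (Fin n) k}
    (h : X i * g ∈ homogeneousSubmodule (Fin n) k (d + 1)) :
    g ∈ homogeneousSubmodule (Fin n) k d := by
  rw [mem_homogeneousSubmodule] at h ⊢
  intro m hm
  have hc : coeff (Finsupp.single i 1 + m) (X i * g) ≠ 0 := by rwa [coeff_X_mul]
  have h2 := h hc
  have h3 : (Finsupp.weight (1 : Fin n → ℕ)) (Finsupp.single i 1 + m)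
      = 1 + (Finsupp.weight (1 : Fin n → ℕ)) m := by
    rw [map_add]
    congr 1
    simp [Finsupp.weight_apply, Finsupp.sum_single_index]
  rw [h3] at h2
  omega

private lemma aux_Xi_lin_inj (i : Fin n) :
    Function.Injective (LinearMap.mulLeft k (X i : MvPolynomial (Fin n) k)) := by
  intro a b hab
  simp only [LinearMap.mulLeft_apply] at hab
  exact mul_left_cancel₀ (X_ne_zero i) hab

private lemma aux_finrank_map_Xi (i : Fin n) (V : Submodule k (MvPolynomial (Fin n) k)) :
    Module.finrank k (Submodule.map (LinearMap.mulLeft k (X i : MvPolynomial (Fin n) k)) V)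
      = Module.finrank k V :=
  (Submodule.equivMapOfInjective _ (aux_Xi_lin_inj i) V).finrank_eq.symm

private lemma aux_mulVars_map (i : Fin n) (V : Submodule k (MvPolynomial (Fin n) k)) :
    mulVars k (Submodule.map (LinearMap.mulLeft k (X i : MvPolynomial (Fin n) k)) V)
      = Submodule.map (LinearMap.mulLeft k (X i : MvPolynomial (Fin n) k)) (mulVars k V) := by
  rw [mulVars, mulVars, Submodule.map_span]
  congr 1
  ext p
  constructor
  · rintro ⟨j, w', ⟨v, hv, rfl⟩, rfl⟩
    exact ⟨X j * v, ⟨j, v, hv, rfl⟩, by simp [LinearMap.mulLeft_apply]; ring⟩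
  · rintro ⟨q, ⟨j, w, hw, rfl⟩, rfl⟩
    exact ⟨j, X i * w, ⟨w, hw, rfl⟩, by simp [LinearMap.mulLeft_apply]; ring⟩

private lemma aux_component_eq (I : Ideal (MvPolynomial (Fin n) k)) (i : Fin n)
    (hle : I ≤ Ideal.span {(X i : MvPolynomial (Fin n) k)}) (d : ℕ) :
    idealComponent k I (d + 1)
      = Submodule.map (LinearMap.mulLeft k (X i : MvPolynomial (Fin n) k))
          (idealComponent k (Submodule.colon I (Ideal.span {(X i : MvPolynomial (Fin n) k)})) d) := by
  ext p
  constructor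
  · rintro ⟨hpI, hphom⟩
    obtain ⟨g, rfl⟩ := Ideal.mem_span_singleton.mp (hle hpI)
    refine ⟨g, ⟨?_, aux_hom_of_X_mul i hphom⟩, rfl⟩
    exact Ideal.mem_colon_span_singleton.mpr (by rwa [mul_comm])
  · rintro ⟨g, ⟨hgJ, hghom⟩, rfl⟩
    refine ⟨?_, aux_hom_mul_X i hghom⟩
    have := Ideal.mem_colon_span_singleton.mp hgJ
    simpa [mul_comm] using this

end AuxColon

/-- **Lemma.** Let `I` be a Gotzmann squarefree monomial ideal of `S` with
`I ⊆ (xᵢ)`.  Then the colon ideal `(I : xᵢ) = {f : xᵢ·f ∈ I}` is a Gotzmann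
squarefree monomial ideal of `S`. -/
theorem colon_of_gotzmann_squarefree {k : Type*} [Field k] {n : ℕ}
    (I : Ideal (MvPolynomial (Fin n) k)) (i : Fin n)
    (hsf : IsSquarefreeMonomialIdeal I) (hG : IsGotzmannIdeal I)
    (hle : I ≤ Ideal.span {(X i : MvPolynomial (Fin n) k)}) :
    IsSquarefreeMonomialIdeal
        (Submodule.colon I (Ideal.span {(X i : MvPolynomial (Fin n) k)})) ∧
      IsGotzmannIdeal
        (Submodule.colon I (Ideal.span {(X i : MvPolynomial (Fin n) k)})) := by
  classical
  constructor
  · -- squarefree part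
    obtain ⟨Gs, hI⟩ := hsf
    have hiA : ∀ A ∈ Gs, i ∈ A := by
      intro A hA
      by_contra hi
      have hmem : sqMonomial k A ∈ I := hI ▸ Ideal.subset_span ⟨A, hA, rfl⟩
      obtain ⟨g, hg⟩ := Ideal.mem_span_singleton.mp (hle hmem)
      set f : Fin n → MvPolynomial (Fin n) k := fun j => if j = i then 0 else X j with hf
      have h0 : (aeval f) (sqMonomial k A) = 0 := by
        rw [hg, map_mul, aeval_X]
        simp [hf]
      have h1 : (aeval f) (sqMonomial k A) = sqMonomial k A := by
        simp only [sqMonomial, map_prod]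
        refine Finset.prod_congr rfl fun j hj => ?_
        rw [aeval_X, hf]
        exact if_neg (by rintro rfl; exact hi hj)
      have h2 : (sqMonomial k A : MvPolynomial (Fin n) k) ≠ 0 := by
        simp only [sqMonomial]
        exact Finset.prod_ne_zero_iff.mpr fun j _ => X_ne_zero j
      exact h2 (h1 ▸ h0)
    have key : ∀ A ∈ Gs, X i * sqMonomial k (A.erase i) = sqMonomial k A := by
      intro A hA
      simp only [sqMonomial]
      exact Finset.mul_prod_erase A _ (hiA A hA)
    refine ⟨(fun A => A.erase i) '' Gs, ?_⟩
    set T := sqMonomial k '' ((fun A => A.erase i) '' Gs) with hT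
    have himg : (fun p => X i * p) '' T = sqMonomial k '' Gs := by
      rw [hT, Set.image_image, Set.image_image]
      exact Set.image_congr key
    have hspan : I = Ideal.span {(X i : MvPolynomial (Fin n) k)} * Ideal.span T := by
      rw [Ideal.span_mul_span', Set.singleton_mul]
      rw [himg, hI]
    ext f
    rw [Ideal.mem_colon_span_singleton]
    constructor
    · intro hfi
      have hmem : X i * f ∈ Ideal.span {(X i : MvPolynomial (Fin n) k)} * Ideal.span T := by
        rw [← hspan]
        rwa [mul_comm] at hfi
      obtain ⟨z, hz, hzf⟩ := Ideal.mem_span_singleton_mul.mp hmem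
      exact (mul_left_cancel₀ (X_ne_zero i) hzf) ▸ hz
    · intro hf
      rw [mul_comm, hspan]
      exact Ideal.mem_span_singleton_mul.mpr ⟨f, hf, rfl⟩
  · -- Gotzmann part
    intro d
    constructor
    · exact inf_le_right
    intro W hW hrank
    have hcomp := aux_component_eq I i hle d
    have hWle : Submodule.map (LinearMap.mulLeft k (X i : MvPolynomial (Fin n) k)) W
        ≤ homogeneousSubmodule (Fin n) k (d + 1) := by
      rintro p ⟨w, hw, rfl⟩
      exact aux_hom_mul_X i (hW hw)
    have hWrank : Module.finrank k
        (Submodule.map (LinearMap.mulLeft k (X i : MvPolynomial (Fin n) k)) W)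
        = Module.finrank k (idealComponent k I (d + 1)) := by
      rw [aux_finrank_map_Xi, hrank, hcomp, aux_finrank_map_Xi]
    have hmain := (hG (d + 1)).2 _ hWle hWrank
    calc Module.finrank k (mulVars k (idealComponent k
          (Submodule.colon I (Ideal.span {(X i : MvPolynomial (Fin n) k)})) d))
        = Module.finrank k (mulVars k (idealComponent k I (d + 1))) := by
          rw [hcomp, aux_mulVars_map, aux_finrank_map_Xi]
      _ ≤ Module.finrank k (mulVars k
            (Submodule.map (LinearMap.mulLeft k (X i : MvPolynomial (Fin n) k)) W)) := hmain
      _ = Module.finrank k (mulVars k W) := by rw [aux_mulVars_map, aux_finrank_map_Xi]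
end

section
/- Let I be a Gotzmann squarefree monomial ideal of S = k[x_1,…,x_n] with x_n ∈ I. Then the ideal of the polynomial ring k[x_1,…,x_{n−1}] generated by the minimal monomial generators of I other than x_n (all of which are monomials in x_1,…,x_{n−1}) is a Gotzmann squarefree monomial ideal of k[x_1,…,x_{n−1}]. -/
open MvPolynomial

section Aux
variable {k : Type*} [Field k] {m : ℕ}

noncomputable def finsetInd {m : ℕ} (A : Finset (Fin m)) : Fin m →₀ ℕ :=
  ∑ i ∈ A, Finsupp.single i 1

lemma finsetInd_apply (A : Finset (Fin m)) (j : Fin m) :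
    finsetInd A j = if j ∈ A then 1 else 0 := by
  classical
  simp [finsetInd, Finsupp.finset_sum_apply, Finsupp.single_apply, Finset.sum_ite_eq']

lemma sqMonomial_eq (A : Finset (Fin m)) :
    sqMonomial k A = monomial (finsetInd A) 1 := by
  classical
  induction A using Finset.induction_on with
  | empty => simp [sqMonomial, finsetInd]
  | @insert a s h ih =>
      have hins : finsetInd (insert a s) = Finsupp.single a 1 + finsetInd s := by
        unfold finsetInd; exact Finset.sum_insert h
      rw [sqMonomial, Finset.prod_insert h, ← sqMonomial, ih, hins, X, monomial_mul, one_mul]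

lemma finsetInd_le_iff (A : Finset (Fin m)) (s : Fin m →₀ ℕ) :
    finsetInd A ≤ s ↔ ∀ i ∈ A, 1 ≤ s i := by
  rw [Finsupp.le_iff]
  constructor
  · intro h i hi
    have := h i (by simp [finsetInd_apply, hi, Finsupp.mem_support_iff])
    simpa [finsetInd_apply, hi] using this
  · intro h i hi
    rw [finsetInd_apply]
    split
    · exact h i ‹_›
    · exact Nat.zero_le _

lemma mem_span_sq (G : Set (Finset (Fin m))) (x : MvPolynomial (Fin m) k) :
    x ∈ Ideal.span (sqMonomial k '' G) ↔
      ∀ s ∈ x.support, ∃ A ∈ G, finsetInd A ≤ s := by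
  have h : sqMonomial k '' G = (fun s => monomial s (1 : k)) '' (finsetInd '' G) := by
    rw [Set.image_image]
    exact Set.image_congr fun A _ => sqMonomial_eq A
  rw [h, mem_ideal_span_monomial_image]
  simp only [Set.mem_image, exists_exists_and_eq_and]

lemma degree_eq_sum (s : Fin m →₀ ℕ) : (s.sum fun _ e => e) = Finsupp.degree s := rfl

end Aux

section Aux2
variable {k : Type*} [Field k] {m : ℕ}

instance homSub_fd (d : ℕ) : FiniteDimensional k (homogeneousSubmodule (Fin m) k d) := by
  apply Submodule.finiteDimensional_of_le (S₂ := restrictTotalDegree (Fin m) k d)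
  intro p hp
  rw [mem_restrictTotalDegree]
  exact ((mem_homogeneousSubmodule _ _).mp hp).totalDegree_le


lemma exists_minimal_sq (I : Ideal (MvPolynomial (Fin m) k)) :
    ∀ A : Finset (Fin m), sqMonomial k A ∈ I →
      ∃ B ⊆ A, sqMonomial k B ∈ I ∧ ∀ C : Finset (Fin m), C ⊂ B → sqMonomial k C ∉ I := by
  classical
  intro A
  induction A using Finset.strongInduction with
  | _ A ih =>
    intro hA
    by_cases h : ∃ C : Finset (Fin m), C ⊂ A ∧ sqMonomial k C ∈ I
    · obtain ⟨C, hC, hCI⟩ := h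
      obtain ⟨B, hBC, hB⟩ := ih C hC hCI
      exact ⟨B, hBC.trans hC.subset, hB⟩
    · exact ⟨A, Finset.Subset.refl A, hA, fun C hC hCI => h ⟨C, hC, hCI⟩⟩

lemma mem_span_Xlast {n : ℕ} (x : MvPolynomial (Fin (n + 1)) k) :
    x ∈ Ideal.span {(X (Fin.last n) : MvPolynomial (Fin (n + 1)) k)} ↔
      ∀ s ∈ x.support, 1 ≤ s (Fin.last n) := by
  have h1 : ({(X (Fin.last n) : MvPolynomial (Fin (n + 1)) k)} : Set _)
      = sqMonomial k '' {({Fin.last n} : Finset (Fin (n + 1)))} := by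
    simp [sqMonomial]
  rw [h1, mem_span_sq]
  constructor
  · intro h s hs
    obtain ⟨A, hA, hle⟩ := h s hs
    simp only [Set.mem_singleton_iff] at hA
    subst hA
    exact (finsetInd_le_iff _ _).mp hle _ (Finset.mem_singleton_self _)
  · intro h s hs
    exact ⟨{Fin.last n}, rfl, (finsetInd_le_iff _ _).mpr (by simpa using h s hs)⟩

end Aux2

section Iota
variable {k : Type*} [Field k] {n : ℕ}

noncomputable def iotaL (k : Type*) [Field k] (n : ℕ) :
    MvPolynomial (Fin n) k →ₗ[k] MvPolynomial (Fin (n + 1)) k :=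
  (rename (R := k) Fin.castSucc).toLinearMap

lemma iotaL_apply (p : MvPolynomial (Fin n) k) :
    iotaL k n p = rename Fin.castSucc p := rfl

lemma iota_injective : Function.Injective (iotaL k n) :=
  rename_injective Fin.castSucc (Fin.castSucc_injective n)

lemma rename_sqMonomial (B : Finset (Fin n)) :
    rename Fin.castSucc (sqMonomial k B) = sqMonomial k (B.image Fin.castSucc) := by
  rw [sqMonomial, map_prod, sqMonomial, Finset.prod_image]
  · simp [rename_X]
  · intro a _ b _ h
    exact Fin.castSucc_injective n h

lemma coeff_iota_eq_zero (p : MvPolynomial (Fin n) k) (s : Fin (n + 1) →₀ ℕ)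
    (hs : s (Fin.last n) ≠ 0) : coeff s (rename Fin.castSucc p) = 0 := by
  apply coeff_rename_eq_zero
  intro u hu
  exfalso
  apply hs
  rw [← hu]
  exact Finsupp.mapDomain_notin_range _ _ (by
    rintro ⟨j, hj⟩
    exact (Fin.castSucc_lt_last j).ne hj)

lemma disjoint_last_iota (V : Submodule k (MvPolynomial (Fin (n + 1)) k))
    (hV : V ≤ Submodule.restrictScalars k
      (Ideal.span {(X (Fin.last n) : MvPolynomial (Fin (n + 1)) k)}))
    (U : Submodule k (MvPolynomial (Fin n) k)) :
    V ⊓ U.map (iotaL k n) = ⊥ := by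
  rw [eq_bot_iff]
  rintro x ⟨hxV, hxU⟩
  obtain ⟨r, _, rfl⟩ := hxU
  have h1 := (mem_span_Xlast _).mp (hV hxV)
  simp only [Submodule.mem_bot]
  ext s
  rw [coeff_zero]
  by_cases hs : s (Fin.last n) = 0
  · by_contra hc
    have := h1 s (by rwa [mem_support_iff])
    omega
  · exact coeff_iota_eq_zero r s hs

lemma finrank_map_iota (U : Submodule k (MvPolynomial (Fin n) k)) :
    Module.finrank k (U.map (iotaL k n)) = Module.finrank k U :=
  (Submodule.equivMapOfInjective _ iota_injective U).symm.finrank_eq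

lemma degree_mapDomain (t : Fin n →₀ ℕ) :
    Finsupp.degree (Finsupp.mapDomain Fin.castSucc t) = Finsupp.degree t := by
  rw [← degree_eq_sum, ← degree_eq_sum, Finsupp.sum_mapDomain_index] <;> simp

lemma finrank_sup_map_iota (V : Submodule k (MvPolynomial (Fin (n + 1)) k))
    (hV : V ≤ Submodule.restrictScalars k
      (Ideal.span {(X (Fin.last n) : MvPolynomial (Fin (n + 1)) k)}))
    (U : Submodule k (MvPolynomial (Fin n) k))
    [FiniteDimensional k V] [FiniteDimensional k U] :
    Module.finrank k ↥(V ⊔ U.map (iotaL k n)) = Module.finrank k V + Module.finrank k U := by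
  have := Submodule.finrank_sup_add_finrank_inf_eq V (U.map (iotaL k n))
  rw [disjoint_last_iota V hV U, finrank_bot, add_zero, finrank_map_iota] at this
  exact this

end Iota


section Structure
variable {k : Type*} [Field k] {n : ℕ}

theorem structure_lemma {I : Ideal (MvPolynomial (Fin (n + 1)) k)}
    (G : Set (Finset (Fin (n + 1)))) (hI : I = Ideal.span (sqMonomial k '' G))
    (hx : (X (Fin.last n) : MvPolynomial (Fin (n + 1)) k) ∈ I) (d : ℕ) :
    idealComponent k I d =
      idealComponent k (Ideal.span {(X (Fin.last n) : MvPolynomial (Fin (n + 1)) k)}) d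
      ⊔ (idealComponent k (Ideal.span (sqMonomial k ''
          {A : Finset (Fin n) | IsMinimalSqGenerator I (A.image Fin.castSucc)})) d).map
          (iotaL k n) := by
  classical
  apply le_antisymm
  · rintro p ⟨hpI, hpd⟩
    have hpI' : ∀ u ∈ p.support, ∃ A ∈ G, finsetInd A ≤ u := by
      rw [← mem_span_sq, ← hI]; exact hpI
    rw [← p.support_sum_monomial_coeff]
    apply Submodule.sum_mem
    intro s hs
    have hdeg : Finsupp.degree s = d := by
      rw [Finsupp.degree_eq_weight_one]
      exact (mem_homogeneousSubmodule _ _).mp hpd (mem_support_iff.mp hs)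
    by_cases hlast : s (Fin.last n) = 0
    · apply Submodule.mem_sup_right
      have hsupp : ∀ i ∈ s.support, i ≠ Fin.last n := fun i hi hne => by
        subst hne; exact (Finsupp.mem_support_iff.mp hi) hlast
      have hrange : ↑s.support ⊆ Set.range (Fin.castSucc : Fin n → Fin (n + 1)) := by
        intro i hi
        exact Fin.exists_castSucc_eq.mpr (hsupp i (by simpa using hi))
      set t : Fin n →₀ ℕ :=
        Finsupp.comapDomain Fin.castSucc s ((Fin.castSucc_injective n).injOn) with ht
      have hmap : Finsupp.mapDomain Fin.castSucc t = s :=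
        Finsupp.mapDomain_comapDomain _ (Fin.castSucc_injective n) s hrange
      have hsupI : sqMonomial k s.support ∈ I := by
        rw [hI, mem_span_sq]
        intro u hu
        rw [sqMonomial_eq] at hu
        have hu' : u = finsetInd s.support := by simpa using support_monomial_subset hu
        subst hu'
        obtain ⟨A, hA, hAs⟩ := hpI' s hs
        refine ⟨A, hA, (finsetInd_le_iff _ _).mpr fun i hi => ?_⟩
        have h1 := (finsetInd_le_iff _ _).mp hAs i hi
        rw [finsetInd_apply, if_pos (Finsupp.mem_support_iff.mpr (by omega))]
      obtain ⟨B, hBsub, hBI, hBmin⟩ := exists_minimal_sq I s.support hsupI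
      have hBlast : Fin.last n ∉ B := fun h => (hsupp _ (hBsub h)) rfl
      set B0 : Finset (Fin n) := Finset.filter (fun j => Fin.castSucc j ∈ B) Finset.univ
        with hB0
      have hB0im : B0.image Fin.castSucc = B := by
        ext i
        simp only [hB0, Finset.mem_image, Finset.mem_filter, Finset.mem_univ, true_and]
        constructor
        · rintro ⟨j, hj, rfl⟩; exact hj
        · intro hi
          have hne : i ≠ Fin.last n := fun h => hBlast (h ▸ hi)
          exact ⟨i.castPred hne, by rwa [Fin.castSucc_castPred], Fin.castSucc_castPred i hne⟩
      have hB0G : IsMinimalSqGenerator I (B0.image Fin.castSucc) := by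
        rw [hB0im]; exact ⟨hBI, hBmin⟩
      refine ⟨monomial t (coeff s p), ⟨?_, ?_⟩, ?_⟩
      · show monomial t (coeff s p) ∈ Ideal.span _
        rw [mem_span_sq]
        intro u hu
        have hu' : u = t := by simpa using support_monomial_subset hu
        subst hu'
        refine ⟨B0, hB0G, (finsetInd_le_iff _ _).mpr fun j hj => ?_⟩
        have hjB : Fin.castSucc j ∈ B := by simpa [hB0] using hj
        have : Fin.castSucc j ∈ s.support := hBsub hjB
        have hts : t j = s (Fin.castSucc j) := rfl
        rw [hts]
        exact Nat.one_le_iff_ne_zero.mpr (Finsupp.mem_support_iff.mp this)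
      · show monomial t (coeff s p) ∈ homogeneousSubmodule _ _ _
        apply isHomogeneous_monomial
        rw [← hmap, degree_mapDomain] at hdeg
        exact hdeg
      · rw [iotaL_apply, rename_monomial, hmap]
    · apply Submodule.mem_sup_left
      refine ⟨?_, ?_⟩
      · show monomial s (coeff s p) ∈ Ideal.span _
        rw [mem_span_Xlast]
        intro u hu
        have hu' : u = s := by simpa using support_monomial_subset hu
        subst hu'
        omega
      · exact isHomogeneous_monomial _ hdeg
  · apply sup_le
    · rintro q ⟨hq1, hq2⟩
      refine ⟨?_, hq2⟩
      have hle : Ideal.span {(X (Fin.last n) : MvPolynomial (Fin (n + 1)) k)} ≤ I :=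
        Ideal.span_le.mpr (by simpa using hx)
      exact hle hq1
    · rintro q ⟨r, ⟨hrJ, hrd⟩, rfl⟩
      refine ⟨?_, ?_⟩
      · have hJle : Ideal.span (sqMonomial k ''
            {A : Finset (Fin n) | IsMinimalSqGenerator I (A.image Fin.castSucc)}) ≤
            Ideal.comap ((rename (R := k) Fin.castSucc :
              MvPolynomial (Fin n) k →ₐ[k] MvPolynomial (Fin (n + 1)) k) :
              MvPolynomial (Fin n) k →+* MvPolynomial (Fin (n + 1)) k) I := by
          rw [Ideal.span_le]
          rintro _ ⟨B, hB, rfl⟩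
          show rename Fin.castSucc (sqMonomial k B) ∈ I
          rw [rename_sqMonomial]
          exact hB.1
        exact hJle hrJ
      · exact ((mem_homogeneousSubmodule _ _).mp hrd).rename_isHomogeneous

end Structure


section L2
variable {k : Type*} [Field k] {n : ℕ}

lemma degree_add' (s t : Fin n →₀ ℕ) :
    Finsupp.degree (s + t) = Finsupp.degree s + Finsupp.degree t := by
  rw [← degree_eq_sum, ← degree_eq_sum, ← degree_eq_sum]
  exact Finsupp.sum_add_index' (fun _ => rfl) (fun _ _ _ => rfl)

lemma degree_single' (i : Fin n) (b : ℕ) :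
    Finsupp.degree (Finsupp.single i b) = b := by
  rw [← degree_eq_sum]
  exact Finsupp.sum_single_index rfl

lemma mulVars_le_hom {m : ℕ} (d : ℕ) (W : Submodule k (MvPolynomial (Fin m) k))
    (hW : W ≤ homogeneousSubmodule (Fin m) k d) :
    mulVars k W ≤ homogeneousSubmodule (Fin m) k (d + 1) := by
  rw [mulVars]
  apply Submodule.span_le.mpr
  rintro _ ⟨i, w, hw, rfl⟩
  have h := (isHomogeneous_X k i).mul ((mem_homogeneousSubmodule _ _).mp (hW hw))
  rw [Nat.add_comm] at h
  exact h

theorem mulVars_sup (d : ℕ) (hd : 1 ≤ d) (W : Submodule k (MvPolynomial (Fin n) k))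
    (hW : W ≤ homogeneousSubmodule (Fin n) k d) :
    mulVars k (idealComponent k
        (Ideal.span {(X (Fin.last n) : MvPolynomial (Fin (n + 1)) k)}) d
        ⊔ W.map (iotaL k n)) =
      idealComponent k (Ideal.span {(X (Fin.last n) : MvPolynomial (Fin (n + 1)) k)}) (d + 1)
        ⊔ (mulVars k W).map (iotaL k n) := by
  classical
  apply le_antisymm
  · rw [mulVars]
    apply Submodule.span_le.mpr
    rintro _ ⟨i, v, hv, rfl⟩
    obtain ⟨y, hy, z, hz, rfl⟩ := Submodule.mem_sup.mp hv
    rw [mul_add]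
    apply Submodule.add_mem
    · apply Submodule.mem_sup_left
      refine ⟨Ideal.mul_mem_left _ _ hy.1, ?_⟩
      have h := (isHomogeneous_X k i).mul ((mem_homogeneousSubmodule _ _).mp hy.2)
      rw [Nat.add_comm 1 d] at h
      exact h
    · obtain ⟨w, hw, rfl⟩ := hz
      induction i using Fin.lastCases with
      | last =>
          apply Submodule.mem_sup_left
          refine ⟨Ideal.mul_mem_right _ _ (Ideal.subset_span rfl), ?_⟩
          have h := (isHomogeneous_X k (Fin.last n)).mul
            (((mem_homogeneousSubmodule _ _).mp (hW hw)).rename_isHomogeneous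
              (f := Fin.castSucc))
          rw [Nat.add_comm 1 d] at h
          exact h
      | cast j =>
          apply Submodule.mem_sup_right
          refine ⟨X j * w, Submodule.subset_span ⟨j, w, hw, rfl⟩, ?_⟩
          rw [iotaL_apply, iotaL_apply, map_mul, rename_X]
  · apply sup_le
    · rintro x ⟨hx1, hx2⟩
      have hx1' : ∀ u ∈ x.support, 1 ≤ u (Fin.last n) := (mem_span_Xlast x).mp hx1
      rw [← x.support_sum_monomial_coeff]
      apply Submodule.sum_mem
      intro s hs
      have hdeg : Finsupp.degree s = d + 1 := by
        rw [Finsupp.degree_eq_weight_one]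
        exact (mem_homogeneousSubmodule _ _).mp hx2 (mem_support_iff.mp hs)
      have hslast := hx1' s hs
      have hi : ∃ i : Fin (n + 1), 1 ≤ s i ∧
          1 ≤ s (Fin.last n) - Finsupp.single i 1 (Fin.last n) := by
        by_cases h2 : 2 ≤ s (Fin.last n)
        · exact ⟨Fin.last n, by omega, by rw [Finsupp.single_eq_same]; omega⟩
        · have hex : ∃ i, i ≠ Fin.last n ∧ 1 ≤ s i := by
            by_contra hc
            push_neg at hc
            have hss : s = Finsupp.single (Fin.last n) (s (Fin.last n)) := by
              ext j
              rcases eq_or_ne j (Fin.last n) with rfl | hj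
              · rw [Finsupp.single_eq_same]
              · rw [Finsupp.single_eq_of_ne' (Ne.symm hj)]
                have := hc j hj
                omega
            rw [hss, degree_single'] at hdeg
            omega
          obtain ⟨i, hi1, hi2⟩ := hex
          refine ⟨i, hi2, ?_⟩
          rw [Finsupp.single_eq_of_ne' hi1]
          omega
      obtain ⟨i, hsi, hslast0⟩ := hi
      set s' : Fin (n + 1) →₀ ℕ := s - Finsupp.single i 1 with hs'def
      have hslast' : 1 ≤ s' (Fin.last n) := by
        rw [hs'def, Finsupp.tsub_apply]
        exact hslast0
      have hadd : (s - Finsupp.single i 1) + Finsupp.single i 1 = s :=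
        tsub_add_cancel_of_le (Finsupp.single_le_iff.mpr hsi)
      have hdeg' : Finsupp.degree (s - Finsupp.single i 1) = d := by
        have h := congrArg Finsupp.degree hadd
        rw [degree_add', degree_single'] at h
        omega
      have hmem : monomial (s - Finsupp.single i 1) (coeff s x) ∈
          idealComponent k (Ideal.span {(X (Fin.last n) : MvPolynomial (Fin (n + 1)) k)}) d := by
        refine ⟨?_, isHomogeneous_monomial _ hdeg'⟩
        show _ ∈ Ideal.span _
        rw [mem_span_Xlast]
        intro u hu
        have hu' : u = s - Finsupp.single i 1 := by simpa using support_monomial_subset hu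
        subst hu'
        exact hslast'
      apply Submodule.subset_span
      refine ⟨i, monomial (s - Finsupp.single i 1) (coeff s x),
        Submodule.mem_sup_left hmem, ?_⟩
      have hadd' : Finsupp.single i 1 + (s - Finsupp.single i 1) = s :=
        add_tsub_cancel_of_le (Finsupp.single_le_iff.mpr hsi)
      rw [X, monomial_mul, one_mul, hadd']
    · have h : (mulVars k W).map (iotaL k n) =
          Submodule.span k ((iotaL k n) ''
            {p : MvPolynomial (Fin n) k | ∃ i : Fin n, ∃ w ∈ W, p = X i * w}) := by
        rw [mulVars, Submodule.map_span]
      rw [h]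
      apply Submodule.span_le.mpr
      rintro _ ⟨_, ⟨j, w, hw, rfl⟩, rfl⟩
      apply Submodule.subset_span
      refine ⟨Fin.castSucc j, iotaL k n w, Submodule.mem_sup_right ⟨w, hw, rfl⟩, ?_⟩
      rw [iotaL_apply, iotaL_apply, map_mul, rename_X]

end L2

section DZero
variable {k : Type*} [Field k]

lemma homSub_zero_le {m : ℕ} : homogeneousSubmodule (Fin m) k 0 ≤
    Submodule.span k {(1 : MvPolynomial (Fin m) k)} := by
  intro p hp
  have h : p = C (coeff 0 p) := by
    ext s
    by_cases hs : s = 0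
    · subst hs; simp [coeff_C]
    · rw [coeff_C, if_neg (Ne.symm hs)]
      by_contra hc
      have h1 := (mem_homogeneousSubmodule _ _).mp hp hc
      have h2 : Finsupp.degree s = 0 := by
        rw [Finsupp.degree_eq_weight_one]; exact h1
      exact hs ((Finsupp.degree_eq_zero_iff s).mp h2)
  rw [h]
  exact Submodule.mem_span_singleton.mpr ⟨coeff 0 p, by rw [smul_eq_C_mul, mul_one]⟩

lemma finrank_homSub_zero_le {m : ℕ} :
    Module.finrank k (homogeneousSubmodule (Fin m) k 0) ≤ 1 := by
  haveI : FiniteDimensional k (Submodule.span k {(1 : MvPolynomial (Fin m) k)}) :=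
    FiniteDimensional.span_of_finite k (Set.finite_singleton 1)
  refine le_trans (Submodule.finrank_mono homSub_zero_le) ?_
  refine le_trans (finrank_span_le_card _) ?_
  simp

lemma eq_of_rank_le_one {M : Type*} [AddCommGroup M] [Module k M] {E U V : Submodule k M}
    [FiniteDimensional k E] (hE : Module.finrank k E ≤ 1) (hU : U ≤ E) (hV : V ≤ E)
    (h : Module.finrank k U = Module.finrank k V) : U = V := by
  haveI := Submodule.finiteDimensional_of_le hU
  haveI := Submodule.finiteDimensional_of_le hV
  by_cases h0 : Module.finrank k U = 0
  · have h0V : Module.finrank k V = 0 := by omega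
    rw [Submodule.finrank_eq_zero.mp h0, Submodule.finrank_eq_zero.mp h0V]
  · have hUE := Submodule.finrank_mono hU
    have hVE := Submodule.finrank_mono hV
    rw [Submodule.eq_of_le_of_finrank_le hU (by omega), Submodule.eq_of_le_of_finrank_le hV (by omega)]

end DZero

theorem quotient_of_gotzmann_squarefree' {k : Type*} [Field k] {n : ℕ}
    (I : Ideal (MvPolynomial (Fin (n + 1)) k))
    (hsf : ∃ G : Set (Finset (Fin (n + 1))), I = Ideal.span (sqMonomial k '' G))
    (hG : ∀ d : ℕ, (idealComponent k I d ≤ homogeneousSubmodule (Fin (n + 1)) k d ∧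
      ∀ W : Submodule k (MvPolynomial (Fin (n + 1)) k),
        W ≤ homogeneousSubmodule (Fin (n + 1)) k d →
        Module.finrank k W = Module.finrank k (idealComponent k I d) →
        Module.finrank k (mulVars k (idealComponent k I d)) ≤ Module.finrank k (mulVars k W)))
    (hx : (X (Fin.last n) : MvPolynomial (Fin (n + 1)) k) ∈ I) :
    ∀ d, (idealComponent k (Ideal.span (sqMonomial k ''
          {A : Finset (Fin n) | IsMinimalSqGenerator I (A.image Fin.castSucc)})) d ≤
            homogeneousSubmodule (Fin n) k d) ∧
      ∀ W : Submodule k (MvPolynomial (Fin n) k),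
        W ≤ homogeneousSubmodule (Fin n) k d →
        Module.finrank k W = Module.finrank k (idealComponent k (Ideal.span (sqMonomial k ''
          {A : Finset (Fin n) | IsMinimalSqGenerator I (A.image Fin.castSucc)})) d) →
        Module.finrank k (mulVars k (idealComponent k (Ideal.span (sqMonomial k ''
          {A : Finset (Fin n) | IsMinimalSqGenerator I (A.image Fin.castSucc)})) d)) ≤
          Module.finrank k (mulVars k W) := by
  classical
  obtain ⟨G, hI⟩ := hsf
  intro d
  refine ⟨inf_le_right, ?_⟩
  intro W hW hWrank
  set J : Ideal (MvPolynomial (Fin n) k) := Ideal.span (sqMonomial k ''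
    {A : Finset (Fin n) | IsMinimalSqGenerator I (A.image Fin.castSucc)}) with hJ
  set V := idealComponent k J d with hV
  have hVle : V ≤ homogeneousSubmodule (Fin n) k d := inf_le_right
  rcases Nat.eq_zero_or_pos d with rfl | hd
  · have hWV : W = V := eq_of_rank_le_one finrank_homSub_zero_le hW hVle hWrank
    rw [hWV]
  · set P := idealComponent k
      (Ideal.span {(X (Fin.last n) : MvPolynomial (Fin (n + 1)) k)}) d with hP
    set Q := idealComponent k
      (Ideal.span {(X (Fin.last n) : MvPolynomial (Fin (n + 1)) k)}) (d + 1) with hQ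
    have hPle : P ≤ homogeneousSubmodule (Fin (n + 1)) k d := inf_le_right
    have hPX : P ≤ Submodule.restrictScalars k
        (Ideal.span {(X (Fin.last n) : MvPolynomial (Fin (n + 1)) k)}) := inf_le_left
    have hQX : Q ≤ Submodule.restrictScalars k
        (Ideal.span {(X (Fin.last n) : MvPolynomial (Fin (n + 1)) k)}) := inf_le_left
    haveI : FiniteDimensional k P := Submodule.finiteDimensional_of_le hPle
    haveI : FiniteDimensional k V := Submodule.finiteDimensional_of_le hVle
    haveI : FiniteDimensional k W := Submodule.finiteDimensional_of_le hW
    haveI : FiniteDimensional k Q :=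
      Submodule.finiteDimensional_of_le (inf_le_right : Q ≤ _)
    haveI : FiniteDimensional k (mulVars k V) :=
      Submodule.finiteDimensional_of_le (mulVars_le_hom d V hVle)
    haveI : FiniteDimensional k (mulVars k W) :=
      Submodule.finiteDimensional_of_le (mulVars_le_hom d W hW)
    have hstruct := structure_lemma G hI hx d
    have hWhat_le : P ⊔ W.map (iotaL k n) ≤ homogeneousSubmodule (Fin (n + 1)) k d := by
      apply sup_le hPle
      rintro _ ⟨w, hw, rfl⟩
      exact ((mem_homogeneousSubmodule _ _).mp (hW hw)).rename_isHomogeneous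
    have hrank : Module.finrank k ↥(P ⊔ W.map (iotaL k n)) =
        Module.finrank k (idealComponent k I d) := by
      rw [hstruct, finrank_sup_map_iota P hPX W, finrank_sup_map_iota P hPX V, hWrank]
    have hmain := (hG d).2 _ hWhat_le hrank
    rw [hstruct, mulVars_sup d hd V hVle, mulVars_sup d hd W hW] at hmain
    rw [finrank_sup_map_iota Q hQX (mulVars k V), finrank_sup_map_iota Q hQX (mulVars k W)]
      at hmain
    omega


/-- **Lemma.** Let `I` be a Gotzmann squarefree monomial ideal of
`S = k[x₁,…,x_{n+1}]` containing the last variable.  Then the ideal of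
`k[x₁,…,xₙ]` generated by the minimal monomial generators of `I` other than the
last variable (all of which only involve the first `n` variables) is a Gotzmann
squarefree monomial ideal of `k[x₁,…,xₙ]`. -/
theorem quotient_of_gotzmann_squarefree {k : Type*} [Field k] {n : ℕ}
    (I : Ideal (MvPolynomial (Fin (n + 1)) k))
    (hsf : IsSquarefreeMonomialIdeal I) (hG : IsGotzmannIdeal I)
    (hx : (X (Fin.last n) : MvPolynomial (Fin (n + 1)) k) ∈ I) :
    IsSquarefreeMonomialIdeal
        (Ideal.span (sqMonomial k ''
          {A : Finset (Fin n) | IsMinimalSqGenerator I (A.image Fin.castSucc)})) ∧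
      IsGotzmannIdeal
        (Ideal.span (sqMonomial k ''
          {A : Finset (Fin n) | IsMinimalSqGenerator I (A.image Fin.castSucc)})) := by
  refine ⟨⟨_, rfl⟩, fun d => ?_⟩
  exact quotient_of_gotzmann_squarefree' I hsf hG hx d
end

section
/- Let 𝒜 be a Gotzmann family of d-element subsets of a finite set X, let i ∈ X, and let (𝒜₀, 𝒜₁) be the i-decomposition of 𝒜. Then 𝒜₀ is a Gotzmann family of d-element subsets of X ∖ {i}. -/
/-- The upper shadow `∂⁺𝒜 = {A ∪ {x} : A ∈ 𝒜, x ∈ X \ A}` of a family of finite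
sets, taken within the ground set `X`. -/
def upShadowIn {α : Type*} [DecidableEq α] (X : Finset α) (𝒜 : Set (Finset α)) :
    Set (Finset α) :=
  {B | ∃ A ∈ 𝒜, ∃ x ∈ X, x ∉ A ∧ B = insert x A}

/-- A Gotzmann family of `d`-element subsets of the ground set `X`: its upper shadow
(in `X`) is no larger than that of any other family of `d`-element subsets of `X` of
the same cardinality. -/
def IsGotzmannFamily {α : Type*} [DecidableEq α] (X : Finset α) (d : ℕ)
    (𝒜 : Set (Finset α)) : Prop :=
  (∀ A ∈ 𝒜, A ⊆ X ∧ A.card = d) ∧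
    ∀ ℬ : Set (Finset α), (∀ B ∈ ℬ, B ⊆ X ∧ B.card = d) → ℬ.ncard = 𝒜.ncard →
      (upShadowIn X 𝒜).ncard ≤ (upShadowIn X ℬ).ncard

/-- First part `𝒜₀ = {A ∈ 𝒜 : i ∉ A}` of the `i`-decomposition of `𝒜`. -/
def decompZero {α : Type*} (i : α) (𝒜 : Set (Finset α)) : Set (Finset α) :=
  {A ∈ 𝒜 | i ∉ A}

/-- Second part `𝒜₁ = {A \ {i} : A ∈ 𝒜, i ∈ A}` of the `i`-decomposition of `𝒜`. -/
def decompOne {α : Type*} [DecidableEq α] (i : α) (𝒜 : Set (Finset α)) : Set (Finset α) :=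
  {B | ∃ A ∈ 𝒜, i ∈ A ∧ B = A.erase i}

/-- `A` precedes `B` in the lex order on finite sets induced by the strict order `r`:
the `r`-least element of the symmetric difference `A Δ B` lies in `A`. -/
def lexLT {α : Type*} (r : α → α → Prop) (A B : Finset α) : Prop :=
  ∃ x ∈ A, x ∉ B ∧ ∀ y, r y x → (y ∈ A ↔ y ∈ B)

/-- `r` is a strict linear order on the elements of `Y`. -/
def IsLinearOrderOn {α : Type*} (r : α → α → Prop) (Y : Finset α) : Prop :=
  (∀ a ∈ Y, ¬ r a a) ∧
    (∀ a ∈ Y, ∀ b ∈ Y, ∀ c ∈ Y, r a b → r b c → r a c) ∧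
    (∀ a ∈ Y, ∀ b ∈ Y, a ≠ b → r a b ∨ r b a)

/-- A lex segment: a family of `e`-element subsets of `Y` that is an initial segment
of the lex order (induced by the strict order `r`) on `e`-element subsets of `Y`. -/
def IsLexSegmentFamily {α : Type*} (r : α → α → Prop) (Y : Finset α) (e : ℕ)
    (L : Set (Finset α)) : Prop :=
  (∀ B ∈ L, B ⊆ Y ∧ B.card = e) ∧
    ∀ B ∈ L, ∀ A : Finset α, A ⊆ Y → A.card = e → lexLT r A B → A ∈ L

/-- The Alexander dual `𝒜^∨ = {X \ A : A ⊆ X, |A| = d, A ∉ 𝒜}` of a family `𝒜` of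
`d`-element subsets of `X`. -/
def alexDual {α : Type*} [DecidableEq α] (X : Finset α) (d : ℕ) (𝒜 : Set (Finset α)) :
    Set (Finset α) :=
  {B | ∃ A : Finset α, A ⊆ X ∧ A.card = d ∧ A ∉ 𝒜 ∧ B = X \ A}

/-- A family of `d`-element subsets of `X` is dual-Gotzmann if its Alexander dual is
Gotzmann in `X`. -/
def IsDualGotzmann {α : Type*} [DecidableEq α] (X : Finset α) (d : ℕ)
    (𝒜 : Set (Finset α)) : Prop :=
  IsGotzmannFamily X (X.card - d) (alexDual X d 𝒜)


/-! ### Auxiliary development -/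

open Finset Function
open scoped FinsetFamily

attribute [-instance] instDecidableEqFin

namespace GotzmannAux

open Finset.Colex

variable {α : Type*} [DecidableEq α]

/-- Finset version of `upShadowIn`. -/
def upFin (X : Finset α) (𝒜 : Finset (Finset α)) : Finset (Finset α) :=
  𝒜.sup fun s => (X \ s).image fun x => insert x s

lemma mem_upFin {X : Finset α} {𝒜 : Finset (Finset α)} {B : Finset α} :
    B ∈ upFin X 𝒜 ↔ ∃ A ∈ 𝒜, ∃ x ∈ X, x ∉ A ∧ B = insert x A := by
  simp only [upFin, mem_sup, mem_image, mem_sdiff]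
  constructor
  · rintro ⟨A, hA, x, ⟨hx, hxA⟩, rfl⟩
    exact ⟨A, hA, x, hx, hxA, rfl⟩
  · rintro ⟨A, hA, x, hx, hxA, rfl⟩
    exact ⟨A, hA, x, ⟨hx, hxA⟩, rfl⟩

lemma coe_upFin (X : Finset α) (𝒜 : Finset (Finset α)) :
    (upFin X 𝒜 : Set (Finset α)) = upShadowIn X ↑𝒜 := by
  ext B
  simp only [mem_coe, mem_upFin, upShadowIn, Set.mem_setOf_eq]

lemma ncard_upShadowIn (X : Finset α) (𝒜 : Finset (Finset α)) :
    (upShadowIn X ↑𝒜).ncard = #(upFin X 𝒜) := by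
  rw [← coe_upFin, Set.ncard_coe_finset]

lemma card_shadow_split (t : α) (𝒦₀ 𝒦₁ : Finset (Finset α))
    (h₀ : ∀ K ∈ 𝒦₀, t ∉ K) (h₁ : ∀ K ∈ 𝒦₁, t ∉ K) :
    #(∂ (𝒦₀ ∪ 𝒦₁.image (insert t))) = #(∂ 𝒦₀ ∪ 𝒦₁) + #(∂ 𝒦₁) := by
  set 𝒦 := 𝒦₀ ∪ 𝒦₁.image (insert t) with h𝒦
  have e0 : (∂ 𝒦).filter (fun S => t ∉ S) = ∂ 𝒦₀ ∪ 𝒦₁ := by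
    ext S
    simp only [mem_filter, mem_union, mem_shadow_iff]
    constructor
    · rintro ⟨⟨K, hK, x, hx, rfl⟩, htS⟩
      rcases mem_union.1 hK with hK | hK
      · exact Or.inl ⟨K, hK, x, hx, rfl⟩
      · obtain ⟨G, hG, rfl⟩ := mem_image.1 hK
        rcases eq_or_ne x t with rfl | hxt
        · rw [erase_insert (h₁ G hG)]
          exact Or.inr hG
        · exact absurd (mem_erase.2 ⟨hxt.symm, mem_insert_self _ _⟩) htS
    · rintro (⟨K, hK, x, hx, rfl⟩ | hS)
      · exact ⟨⟨K, mem_union_left _ hK, x, hx, rfl⟩,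
          fun ht => h₀ K hK (mem_of_mem_erase ht)⟩
      · exact ⟨⟨insert t S, mem_union_right _ (mem_image_of_mem _ hS), t,
          mem_insert_self _ _, erase_insert (h₁ S hS)⟩, h₁ S hS⟩
  have e1 : (∂ 𝒦).filter (fun S => t ∈ S) = (∂ 𝒦₁).image (insert t) := by
    ext S
    simp only [mem_filter, mem_image, mem_shadow_iff]
    constructor
    · rintro ⟨⟨K, hK, x, hx, rfl⟩, htS⟩
      have hxt : x ≠ t := by rintro rfl; exact (notMem_erase x K) htS
      have htK : t ∈ K := mem_of_mem_erase htS
      rcases mem_union.1 hK with hK | hK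
      · exact absurd htK (h₀ K hK)
      · obtain ⟨G, hG, rfl⟩ := mem_image.1 hK
        have hxG : x ∈ G := mem_of_mem_insert_of_ne hx hxt
        exact ⟨G.erase x, ⟨G, hG, x, hxG, rfl⟩, (erase_insert_of_ne (fun h => hxt h.symm)).symm⟩
    · rintro ⟨T, ⟨G, hG, x, hx, rfl⟩, rfl⟩
      have hxt : t ≠ x := fun h => h₁ G hG (h ▸ hx)
      exact ⟨⟨insert t G, mem_union_right _ (mem_image_of_mem _ hG), x,
        mem_insert_of_mem hx, erase_insert_of_ne hxt⟩, mem_insert_self _ _⟩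
  have hinj : Set.InjOn (insert t) ((∂ 𝒦₁ : Finset (Finset α)) : Set (Finset α)) := by
    intro a ha b hb hab
    have hta : t ∉ a := by
      obtain ⟨K, hK, x, hx, rfl⟩ := mem_shadow_iff.1 (mem_coe.1 ha)
      exact fun ht => h₁ K hK (mem_of_mem_erase ht)
    have htb : t ∉ b := by
      obtain ⟨K, hK, x, hx, rfl⟩ := mem_shadow_iff.1 (mem_coe.1 hb)
      exact fun ht => h₁ K hK (mem_of_mem_erase ht)
    rw [← erase_insert hta, hab, erase_insert htb]
  have hsum : #((∂ 𝒦).filter (fun S => t ∈ S)) + #((∂ 𝒦).filter (fun S => ¬ t ∈ S))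
      = #(∂ 𝒦) := card_filter_add_card_filter_not _
  rw [e1, e0, card_image_of_injOn hinj] at hsum
  omega

lemma exists_initial_card {β : Type*} [LinearOrder β] (m : ℕ) (P : Finset β) (hm : m ≤ #P) :
    ∃ Q, Q ⊆ P ∧ #Q = m ∧ ∀ x ∈ Q, ∀ y ∈ P, y < x → y ∈ Q := by
  classical
  induction m with
  | zero => exact ⟨∅, empty_subset _, card_empty, by simp⟩
  | succ m ih =>
    obtain ⟨Q, hQP, hQcard, hQinit⟩ := ih (Nat.le_of_succ_le hm)
    have hne : (P \ Q).Nonempty := by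
      rw [sdiff_nonempty]
      intro hsub
      have := card_le_card hsub
      omega
    have hxP : (P \ Q).min' hne ∈ P := (mem_sdiff.1 ((P \ Q).min'_mem hne)).1
    have hxQ : (P \ Q).min' hne ∉ Q := (mem_sdiff.1 ((P \ Q).min'_mem hne)).2
    refine ⟨insert ((P \ Q).min' hne) Q, insert_subset hxP hQP,
      by rw [card_insert_of_notMem hxQ, hQcard], ?_⟩
    intro z hz y hyP hyz
    rcases mem_insert.1 hz with rfl | hzQ
    · by_cases hyQ : y ∈ Q
      · exact mem_insert_of_mem hyQ
      · exact absurd (min'_le _ _ (mem_sdiff.2 ⟨hyP, hyQ⟩)) (not_le.2 hyz)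
    · exact mem_insert_of_mem (hQinit z hzQ y hyP hyz)

lemma exists_initSeg (n r m : ℕ) (hm : m ≤ n.choose r) :
    ∃ 𝒞 : Finset (Finset (Fin n)), #𝒞 = m ∧ IsInitSeg 𝒞 r := by
  classical
  set P := (powersetCard r (univ : Finset (Fin n))).image toColex with hP
  have hPcard : #P = n.choose r := by
    rw [hP, card_image_of_injective _ toColex.injective, card_powersetCard, card_univ,
      Fintype.card_fin]
  obtain ⟨Q, hQP, hQcard, hQinit⟩ := exists_initial_card m P (hPcard ▸ hm)
  have hmem : ∀ S : Finset (Fin n), S ∈ Q.image ofColex ↔ toColex S ∈ Q := by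
    intro S
    constructor
    · intro hS
      obtain ⟨q, hq, rfl⟩ := mem_image.1 hS
      rwa [toColex_ofColex]
    · intro h
      exact mem_image.2 ⟨_, h, ofColex_toColex S⟩
  have hsub : ∀ S : Finset (Fin n), S ∈ Q.image ofColex → S ∈ powersetCard r univ := by
    intro S hS
    have hmemP : toColex S ∈ P := hQP ((hmem S).1 hS)
    obtain ⟨T, hT, hTS⟩ := mem_image.1 hmemP
    rwa [← toColex_inj.1 hTS]
  refine ⟨Q.image ofColex, ?_, ?_, ?_⟩
  · rw [card_image_of_injective _ ofColex.injective, hQcard]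
  · intro S hS
    exact (mem_powersetCard.1 (hsub S (mem_coe.1 hS))).2
  · intro s u hs hu
    apply (hmem u).2
    refine hQinit _ ((hmem s).1 hs) _ ?_ hu.1
    exact mem_image_of_mem _ (mem_powersetCard.2 ⟨subset_univ _, hu.2⟩)

lemma initSeg_avoid {n r : ℕ} {𝒞 : Finset (Finset (Fin n))} (h : IsInitSeg 𝒞 r)
    {t : Fin n} (ht : ∀ k, k ≤ t) (hcard : #𝒞 ≤ (n - 1).choose r) :
    ∀ S ∈ 𝒞, t ∉ S := by
  intro S hS htS
  have hsub : powersetCard r (univ.erase t) ⊆ 𝒞 := by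
    intro T hT
    obtain ⟨hTsub, hTcard⟩ := mem_powersetCard.1 hT
    have htT : t ∉ T := fun h' => (mem_erase.1 (hTsub h')).1 rfl
    refine h.2 hS ⟨?_, hTcard⟩
    rw [toColex_lt_toColex_iff_exists_forall_lt]
    exact ⟨t, htS, htT, fun b hb hbS => lt_of_le_of_ne (ht b) (fun h' => htT (h' ▸ hb))⟩
  have hSnot : S ∉ powersetCard r (univ.erase t) := by
    intro h'
    exact (mem_erase.1 ((mem_powersetCard.1 h').1 htS)).1 rfl
  have hle : #(insert S (powersetCard r (univ.erase t))) ≤ #𝒞 :=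
    card_le_card (insert_subset hS hsub)
  rw [card_insert_of_notMem hSnot, card_powersetCard, card_erase_of_mem (mem_univ t),
    card_univ, Fintype.card_fin] at hle
  omega

lemma shadow_map {β : Type*} [DecidableEq β] (f : α ↪ β) (ℋ : Finset (Finset α)) :
    ∂ (ℋ.image fun S => S.map f) = (∂ ℋ).image fun S => S.map f := by
  ext T
  simp only [mem_shadow_iff, mem_image]
  constructor
  · rintro ⟨K, ⟨S, hS, rfl⟩, a, ha, rfl⟩
    obtain ⟨k, hk, rfl⟩ := mem_map.1 ha
    exact ⟨S.erase k, ⟨S, hS, k, hk, rfl⟩, map_erase f S k⟩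
  · rintro ⟨K, ⟨S, hS, k, hk, rfl⟩, rfl⟩
    exact ⟨S.map f, ⟨S, hS, rfl⟩, f k, mem_map_of_mem f hk, (map_erase f S k).symm⟩

lemma exists_preimage_family {n : ℕ} (gemb : Fin n ↪ α) (𝒢 : Finset (Finset α))
    (h : ∀ A ∈ 𝒢, A ⊆ univ.map gemb) :
    ∃ ℋ : Finset (Finset (Fin n)), ℋ.image (fun S => S.map gemb) = 𝒢 ∧ #ℋ = #𝒢 := by
  classical
  have hpt : ∀ A ∈ 𝒢, ((univ.filter fun k => gemb k ∈ A).map gemb) = A := by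
    intro A hA
    ext b
    simp only [mem_map, mem_filter, mem_univ, true_and]
    constructor
    · rintro ⟨k, hk, rfl⟩; exact hk
    · intro hb
      obtain ⟨k, -, rfl⟩ := mem_map.1 (h A hA hb)
      exact ⟨k, hb, rfl⟩
  have him : (𝒢.image fun A => univ.filter fun k => gemb k ∈ A).image
      (fun S => S.map gemb) = 𝒢 := by
    rw [image_image]
    exact (image_congr fun A hA => hpt A hA).trans image_id
  refine ⟨𝒢.image fun A => univ.filter fun k => gemb k ∈ A, him, ?_⟩
  refine le_antisymm card_image_le ?_
  conv_lhs => rw [← him]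
  exact card_image_le

theorem coreFin {n : ℕ} (t : Fin n) (ht : ∀ k : Fin n, k ≤ t) (e : ℕ)
    (ℱ : Finset (Finset (Fin n)))
    (hsized : ∀ F ∈ ℱ, #F = e)
    (hmin : ∀ 𝒢 : Finset (Finset (Fin n)), (∀ G ∈ 𝒢, #G = e) → #𝒢 = #ℱ →
      #(∂ ℱ) ≤ #(∂ 𝒢))
    (ℬ : Finset (Finset (Fin n))) (hℬ : ∀ B ∈ ℬ, #B = e - 1)
    (hℬcard : #ℬ = #((ℱ.filter fun S => t ∈ S).image fun S => S.erase t)) :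
    #(∂ ((ℱ.filter fun S => t ∈ S).image fun S => S.erase t)) ≤ #(∂ ℬ) := by
  classical
  set ℱ₀ := ℱ.filter (fun S => ¬ t ∈ S) with hℱ₀
  set ℱ₁ := (ℱ.filter fun S => t ∈ S).image (fun S => S.erase t) with hℱ₁
  rcases ℱ₁.eq_empty_or_nonempty with h1e | h1ne
  · simp [h1e]
  obtain ⟨S₁, hS₁⟩ := h1ne
  obtain ⟨F₁, hF₁mem, rfl⟩ := mem_image.1 hS₁
  have hF₁ := mem_filter.1 hF₁mem
  have he : 1 ≤ e := by
    have h1 := hsized F₁ hF₁.1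
    have h2 := card_pos.2 ⟨t, hF₁.2⟩
    omega
  have h1avoid : ∀ S ∈ ℱ₁, t ∉ S := by
    intro S hS
    obtain ⟨F, hF, rfl⟩ := mem_image.1 hS
    exact notMem_erase _ _
  have h0avoid : ∀ S ∈ ℱ₀, t ∉ S := fun S hS => (mem_filter.1 hS).2
  have h1sized : ∀ S ∈ ℱ₁, #S = e - 1 := by
    intro S hS
    obtain ⟨F, hF, rfl⟩ := mem_image.1 hS
    have hF' := mem_filter.1 hF
    rw [card_erase_of_mem hF'.2, hsized F hF'.1]
  have h0sized : ∀ S ∈ ℱ₀, #S = e := fun S hS => hsized S (mem_filter.1 hS).1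
  have hsplit : ℱ = ℱ₀ ∪ ℱ₁.image (insert t) := by
    ext F
    constructor
    · intro hF
      by_cases htF : t ∈ F
      · exact mem_union_right _ (mem_image.2 ⟨F.erase t,
          mem_image.2 ⟨F, mem_filter.2 ⟨hF, htF⟩, rfl⟩, insert_erase htF⟩)
      · exact mem_union_left _ (mem_filter.2 ⟨hF, htF⟩)
    · intro hF
      rcases mem_union.1 hF with h | h
      · exact (mem_filter.1 h).1
      · obtain ⟨S, hS, rfl⟩ := mem_image.1 h
        obtain ⟨F', hF', rfl⟩ := mem_image.1 hS
        rw [insert_erase (mem_filter.1 hF').2]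
        exact (mem_filter.1 hF').1
  have hc1 : #ℱ₁ = #(ℱ.filter fun S => t ∈ S) := by
    apply card_image_of_injOn
    intro a ha b hb hab
    have hab' : a.erase t = b.erase t := hab
    rw [← insert_erase (mem_filter.1 (mem_coe.1 ha)).2, hab',
      insert_erase (mem_filter.1 (mem_coe.1 hb)).2]
  have hcards : #ℱ = #ℱ₀ + #ℱ₁ := by
    have hsum : #(ℱ.filter (fun S => t ∈ S)) + #ℱ₀ = #ℱ :=
      card_filter_add_card_filter_not _
    rw [hc1]
    omega
  have h1le : #ℱ₁ ≤ (n - 1).choose (e - 1) := by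
    have hss : ℱ₁ ⊆ powersetCard (e - 1) (univ.erase t) := by
      intro S hS
      exact mem_powersetCard.2 ⟨subset_erase.2 ⟨subset_univ S, h1avoid S hS⟩, h1sized S hS⟩
    have hcc := card_le_card hss
    rwa [card_powersetCard, card_erase_of_mem (mem_univ t), card_univ, Fintype.card_fin] at hcc
  have h0le : #ℱ₀ ≤ (n - 1).choose e := by
    have hss : ℱ₀ ⊆ powersetCard e (univ.erase t) := by
      intro S hS
      exact mem_powersetCard.2 ⟨subset_erase.2 ⟨subset_univ S, h0avoid S hS⟩, h0sized S hS⟩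
    have hcc := card_le_card hss
    rwa [card_powersetCard, card_erase_of_mem (mem_univ t), card_univ, Fintype.card_fin] at hcc
  obtain ⟨𝒞, h𝒞card, h𝒞seg⟩ := exists_initSeg n (e - 1) #ℱ₁
    (h1le.trans (Nat.choose_le_choose _ (Nat.sub_le n 1)))
  obtain ⟨𝒟, h𝒟card, h𝒟seg⟩ := exists_initSeg n e #ℱ₀
    (h0le.trans (Nat.choose_le_choose _ (Nat.sub_le n 1)))
  have h𝒞avoid : ∀ S ∈ 𝒞, t ∉ S := initSeg_avoid h𝒞seg ht (h𝒞card ▸ h1le)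
  have h𝒟avoid : ∀ S ∈ 𝒟, t ∉ S := initSeg_avoid h𝒟seg ht (h𝒟card ▸ h0le)
  have h𝒢sized : ∀ G ∈ 𝒟 ∪ 𝒞.image (insert t), #G = e := by
    intro G hG
    rcases mem_union.1 hG with h | h
    · exact h𝒟seg.1 (mem_coe.2 h)
    · obtain ⟨C, hC, rfl⟩ := mem_image.1 h
      rw [card_insert_of_notMem (h𝒞avoid C hC), h𝒞seg.1 (mem_coe.2 hC)]
      omega
  have hdisj : Disjoint 𝒟 (𝒞.image (insert t)) := by
    rw [disjoint_left]
    intro K hK hK'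
    obtain ⟨C, hC, rfl⟩ := mem_image.1 hK'
    exact h𝒟avoid _ hK (mem_insert_self t C)
  have hinsinj : #(𝒞.image (insert t)) = #𝒞 := by
    apply card_image_of_injOn
    intro a ha b hb hab
    rw [← erase_insert (h𝒞avoid a (mem_coe.1 ha)), hab, erase_insert (h𝒞avoid b (mem_coe.1 hb))]
  have h𝒢card : #(𝒟 ∪ 𝒞.image (insert t)) = #ℱ := by
    rw [card_union_of_disjoint hdisj, hinsinj, h𝒞card, h𝒟card, hcards]
  have key := hmin _ h𝒢sized h𝒢card
  rw [hsplit, card_shadow_split t ℱ₀ ℱ₁ h0avoid h1avoid,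
    card_shadow_split t 𝒟 𝒞 h𝒟avoid h𝒞avoid] at key
  have hDshadow : IsInitSeg (∂ 𝒟) (e - 1) := h𝒟seg.shadow
  have hDF : #(∂ 𝒟) ≤ #(∂ ℱ₀) :=
    Finset.kruskal_katona (fun S hS => h0sized S (mem_coe.1 hS)) (le_of_eq h𝒟card) h𝒟seg
  have hunion : #(∂ 𝒟 ∪ 𝒞) ≤ #(∂ ℱ₀ ∪ ℱ₁) := by
    rcases hDshadow.total h𝒞seg with h | h
    · rw [union_eq_right.2 h, h𝒞card]
      exact card_le_card subset_union_right
    · rw [union_eq_left.2 h]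
      exact hDF.trans (card_le_card subset_union_left)
  have hfinal : #(∂ ℱ₁) ≤ #(∂ 𝒞) := by omega
  have hlast : #(∂ 𝒞) ≤ #(∂ ℬ) :=
    Finset.kruskal_katona (fun B hB => hℬ B (mem_coe.1 hB)) (by omega) h𝒞seg
  exact hfinal.trans hlast

lemma upFin_subset {X : Finset α} {𝒜 : Finset (Finset α)} (h : ∀ A ∈ 𝒜, A ⊆ X) :
    ∀ B ∈ upFin X 𝒜, B ⊆ X := by
  intro B hB
  obtain ⟨A, hA, x, hx, hxA, rfl⟩ := mem_upFin.1 hB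
  exact insert_subset hx (h A hA)

lemma sdiff_injOn (X : Finset α) : ∀ A, A ⊆ X → ∀ B, B ⊆ X → X \ A = X \ B → A = B := by
  intro A hA B hB h
  calc A = X \ (X \ A) := (Finset.sdiff_sdiff_eq_self hA).symm
    _ = X \ (X \ B) := by rw [h]
    _ = B := Finset.sdiff_sdiff_eq_self hB

lemma compl_upFin (X : Finset α) (𝒜 : Finset (Finset α)) (h : ∀ A ∈ 𝒜, A ⊆ X) :
    ∂ (𝒜.image fun A => X \ A) = (upFin X 𝒜).image fun A => X \ A := by
  ext T
  simp only [mem_shadow_iff, mem_image, mem_upFin]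
  constructor
  · rintro ⟨K, ⟨A, hA, rfl⟩, x, hx, rfl⟩
    have hx' := mem_sdiff.1 hx
    exact ⟨insert x A, ⟨A, hA, x, hx'.1, hx'.2, rfl⟩, sdiff_insert X A x⟩
  · rintro ⟨B, ⟨A, hA, x, hxX, hxA, rfl⟩, rfl⟩
    exact ⟨X \ A, ⟨A, hA, rfl⟩, x, mem_sdiff.2 ⟨hxX, hxA⟩, (sdiff_insert X A x).symm⟩

lemma card_upFin (X : Finset α) (𝒜 : Finset (Finset α)) (h : ∀ A ∈ 𝒜, A ⊆ X) :
    #(upFin X 𝒜) = #(∂ (𝒜.image fun A => X \ A)) := by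
  rw [compl_upFin X 𝒜 h]
  exact (card_image_of_injOn fun A hA B hB =>
    sdiff_injOn X A (upFin_subset h A (mem_coe.1 hA)) B (upFin_subset h B (mem_coe.1 hB))).symm

lemma card_image_sdiff (X : Finset α) (𝒜 : Finset (Finset α)) (h : ∀ A ∈ 𝒜, A ⊆ X) :
    #(𝒜.image fun A => X \ A) = #𝒜 :=
  card_image_of_injOn fun A hA B hB =>
    sdiff_injOn X A (h A (mem_coe.1 hA)) B (h B (mem_coe.1 hB))

lemma image_sdiff_involutive (X : Finset α) (𝒜 : Finset (Finset α)) (h : ∀ A ∈ 𝒜, A ⊆ X) :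
    ((𝒜.image fun A => X \ A).image fun A => X \ A) = 𝒜 := by
  rw [image_image]
  exact (image_congr fun A hA => Finset.sdiff_sdiff_eq_self (h A (mem_coe.1 hA))).trans image_id

theorem coreα (X : Finset α) (d : ℕ) (𝒜 : Finset (Finset α)) (i : α) (hi : i ∈ X)
    (h𝒜 : ∀ A ∈ 𝒜, A ⊆ X ∧ #A = d)
    (hmin : ∀ ℬ : Finset (Finset α), (∀ B ∈ ℬ, B ⊆ X ∧ #B = d) → #ℬ = #𝒜 →
      #(upFin X 𝒜) ≤ #(upFin X ℬ))
    (ℬ : Finset (Finset α)) (hℬ : ∀ B ∈ ℬ, B ⊆ X.erase i ∧ #B = d)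
    (hcard : #ℬ = #(𝒜.filter fun A => ¬ i ∈ A)) :
    #(upFin (X.erase i) (𝒜.filter fun A => ¬ i ∈ A)) ≤ #(upFin (X.erase i) ℬ) := by
  classical
  set 𝒜₀ := 𝒜.filter (fun A => ¬ i ∈ A) with h𝒜₀def
  rcases ℬ.eq_empty_or_nonempty with rfl | hBne
  · have h0 : #𝒜₀ = 0 := by simpa using hcard.symm
    rw [card_eq_zero.1 h0]
  have h𝒜₀ne : 𝒜₀.Nonempty := by
    have hb0 := card_pos.2 hBne
    exact card_pos.1 (by omega)
  obtain ⟨A₀, hA₀⟩ := h𝒜₀ne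
  have hA₀' := mem_filter.1 hA₀
  have hA₀X : A₀ ⊆ X.erase i := subset_erase.2 ⟨(h𝒜 A₀ hA₀'.1).1, hA₀'.2⟩
  have hdn : d ≤ #X - 1 := by
    have hc := card_le_card hA₀X
    rw [card_erase_of_mem hi] at hc
    have := (h𝒜 A₀ hA₀'.1).2
    omega
  have hn1 : 1 ≤ #X := card_pos.2 ⟨i, hi⟩
  set e := #X - d with he
  have he1 : 1 ≤ e := by omega
  set ℱα := 𝒜.image (fun A => X \ A) with hℱα
  have hℱαsub : ∀ F ∈ ℱα, F ⊆ X := by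
    rintro F hF
    obtain ⟨A, hA, rfl⟩ := mem_image.1 hF
    exact sdiff_subset
  have hℱαsized : ∀ F ∈ ℱα, #F = e := by
    rintro F hF
    obtain ⟨A, hA, rfl⟩ := mem_image.1 hF
    rw [card_sdiff_of_subset (h𝒜 A hA).1, (h𝒜 A hA).2]
  have hℱαcard : #ℱα = #𝒜 := card_image_sdiff X 𝒜 (fun A hA => (h𝒜 A hA).1)
  have hminα : ∀ 𝒢 : Finset (Finset α), (∀ G ∈ 𝒢, G ⊆ X ∧ #G = e) → #𝒢 = #ℱα →
      #(∂ ℱα) ≤ #(∂ 𝒢) := by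
    intro 𝒢 h𝒢 h𝒢card
    have h𝒢sub : ∀ G ∈ 𝒢, G ⊆ X := fun G hG => (h𝒢 G hG).1
    have hℬ'mem : ∀ B ∈ 𝒢.image (fun G => X \ G), B ⊆ X ∧ #B = d := by
      rintro B hB
      obtain ⟨G, hG, rfl⟩ := mem_image.1 hB
      refine ⟨sdiff_subset, ?_⟩
      rw [card_sdiff_of_subset (h𝒢 G hG).1, (h𝒢 G hG).2]
      omega
    have hℬ'card : #(𝒢.image (fun G => X \ G)) = #𝒜 := by
      rw [card_image_sdiff X 𝒢 h𝒢sub, h𝒢card, hℱαcard]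
    have h1 := hmin _ hℬ'mem hℬ'card
    rw [card_upFin X 𝒜 (fun A hA => (h𝒜 A hA).1),
      card_upFin X _ (fun B hB => (hℬ'mem B hB).1),
      image_sdiff_involutive X 𝒢 h𝒢sub] at h1
    exact h1
  let t : Fin #X := ⟨#X - 1, by omega⟩
  have ht : ∀ k : Fin #X, k ≤ t := fun k =>
    Fin.le_def.2 (show (k : ℕ) ≤ #X - 1 by have := k.isLt; omega)
  let ψ : { x // x ∈ X } ≃ Fin #X := X.equivFin.trans (Equiv.swap (X.equivFin ⟨i, hi⟩) t)
  have hginj : Function.Injective (fun k => (ψ.symm k : α)) := fun a b hab =>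
    ψ.symm.injective (Subtype.coe_injective hab)
  let gemb : Fin #X ↪ α := ⟨fun k => (ψ.symm k : α), hginj⟩
  have hgt : gemb t = i := by
    show ((X.equivFin.trans (Equiv.swap (X.equivFin ⟨i, hi⟩) t)).symm t : α) = i
    simp [Equiv.symm_trans_apply, Equiv.swap_apply_right]
  have hgX : univ.map gemb = X := by
    ext a
    simp only [mem_map]
    constructor
    · rintro ⟨k, -, rfl⟩
      exact (ψ.symm k).2
    · intro ha
      refine ⟨ψ ⟨a, ha⟩, mem_univ _, ?_⟩
      show ((ψ.symm (ψ ⟨a, ha⟩)) : α) = a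
      rw [Equiv.symm_apply_apply]
  obtain ⟨ℋ, hℋeq, hℋcard⟩ := exists_preimage_family gemb ℱα
    (by intro A hA; rw [hgX]; exact hℱαsub A hA)
  have hℋsized : ∀ S ∈ ℋ, #S = e := by
    intro S hS
    have hmem : S.map gemb ∈ ℱα := by
      rw [← hℋeq]; exact mem_image_of_mem _ hS
    have := hℱαsized _ hmem
    rwa [card_map] at this
  have hshadow_card : ∀ 𝒦 : Finset (Finset (Fin #X)),
      #(∂ (𝒦.image fun S => S.map gemb)) = #(∂ 𝒦) := by
    intro 𝒦
    rw [shadow_map]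
    exact card_image_of_injective _ (map_injective gemb)
  have hminFin : ∀ 𝒢 : Finset (Finset (Fin #X)), (∀ G ∈ 𝒢, #G = e) → #𝒢 = #ℋ →
      #(∂ ℋ) ≤ #(∂ 𝒢) := by
    intro 𝒢 h𝒢s h𝒢c
    have h1 : #(∂ ℱα) ≤ #(∂ (𝒢.image fun S => S.map gemb)) := by
      apply hminα
      · intro G hG
        obtain ⟨S, hS, rfl⟩ := mem_image.1 hG
        refine ⟨?_, ?_⟩
        · intro x hx
          rw [← hgX]
          exact map_subset_map.2 (subset_univ S) hx
        · rw [card_map]; exact h𝒢s S hS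
      · rw [card_image_of_injective _ (map_injective gemb), h𝒢c, hℋcard, hℱαcard]
    have h2 : #(∂ ℱα) = #(∂ ℋ) := by rw [← hℋeq, hshadow_card]
    rw [h2, hshadow_card 𝒢] at h1
    exact h1
  have h𝒜₀sub : ∀ A ∈ 𝒜₀, A ⊆ X.erase i := fun A hA =>
    subset_erase.2 ⟨(h𝒜 A (mem_filter.1 hA).1).1, (mem_filter.1 hA).2⟩
  have hLHS : #(upFin (X.erase i) 𝒜₀) = #(∂ (𝒜₀.image fun A => X.erase i \ A)) :=
    card_upFin (X.erase i) 𝒜₀ h𝒜₀sub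
  have hfilter : ℱα.filter (fun F => i ∈ F) = 𝒜₀.image (fun A => X \ A) := by
    rw [hℱα, filter_image, h𝒜₀def]
    congr 1
    apply filter_congr
    intro A hA
    simp [mem_sdiff, hi]
  have hclaim1 : 𝒜₀.image (fun A => X.erase i \ A)
      = (ℱα.filter fun F => i ∈ F).image (fun F => F.erase i) := by
    rw [hfilter, image_image]
    apply image_congr
    intro A hA
    show X.erase i \ A = (X \ A).erase i
    rw [erase_sdiff_comm]
  have hmemt : ∀ S : Finset (Fin #X), (i ∈ S.map gemb) ↔ t ∈ S := by
    intro S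
    have hmm := mem_map' gemb (a := t) (s := S)
    rwa [hgt] at hmm
  have hclaim2 : (ℱα.filter fun F => i ∈ F).image (fun F => F.erase i)
      = ((ℋ.filter fun S => t ∈ S).image fun S => S.erase t).image (fun S => S.map gemb) := by
    rw [← hℋeq, filter_image]
    have hfc : (ℋ.filter fun S => i ∈ S.map gemb) = ℋ.filter fun S => t ∈ S :=
      filter_congr fun S _ => by rw [hmemt S]
    rw [hfc, image_image, image_image]
    apply image_congr
    intro S hS
    show (S.map gemb).erase i = (S.erase t).map gemb
    rw [map_erase, hgt]
  have h𝒜₀img : #(𝒜₀.image fun A => X.erase i \ A) = #𝒜₀ :=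
    card_image_sdiff (X.erase i) 𝒜₀ h𝒜₀sub
  have hℬsub : ∀ B ∈ ℬ, B ⊆ X.erase i := fun B hB => (hℬ B hB).1
  have hRHS : #(upFin (X.erase i) ℬ) = #(∂ (ℬ.image fun B => X.erase i \ B)) :=
    card_upFin (X.erase i) ℬ hℬsub
  have h𝒢αsub : ∀ G ∈ ℬ.image (fun B => X.erase i \ B), G ⊆ univ.map gemb := by
    rintro G hG
    rw [hgX]
    obtain ⟨B, hB, rfl⟩ := mem_image.1 hG
    exact sdiff_subset.trans (erase_subset _ _)
  obtain ⟨ℋℬ, hℋℬeq, hℋℬcard⟩ := exists_preimage_family gemb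
    (ℬ.image (fun B => X.erase i \ B)) h𝒢αsub
  have hℋℬsized : ∀ S ∈ ℋℬ, #S = e - 1 := by
    intro S hS
    have hmem : S.map gemb ∈ ℬ.image (fun B => X.erase i \ B) := by
      rw [← hℋℬeq]; exact mem_image_of_mem _ hS
    obtain ⟨B, hB, hBeq⟩ := mem_image.1 hmem
    have hcd : #(X.erase i \ B) = e - 1 := by
      rw [card_sdiff_of_subset (hℬ B hB).1, card_erase_of_mem hi, (hℬ B hB).2]
      omega
    calc #S = #(S.map gemb) := (card_map _).symm
      _ = #(X.erase i \ B) := by rw [hBeq]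
      _ = e - 1 := hcd
  have hc2 : #(ℬ.image (fun B => X.erase i \ B)) = #ℬ :=
    card_image_sdiff (X.erase i) ℬ hℬsub
  have hc3 : #((ℋ.filter fun S => t ∈ S).image fun S => S.erase t) = #𝒜₀ := by
    have hcc := congrArg Finset.card hclaim2
    rw [card_image_of_injective _ (map_injective gemb)] at hcc
    rw [← hcc, ← hclaim1, h𝒜₀img]
  have hcardfin : #ℋℬ = #((ℋ.filter fun S => t ∈ S).image fun S => S.erase t) := by
    rw [hℋℬcard, hc2, hcard, hc3]
  have hmain := coreFin t ht e ℋ hℋsized hminFin ℋℬ hℋℬsized hcardfin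
  have hL : #(∂ ((ℋ.filter fun S => t ∈ S).image fun S => S.erase t))
      = #(upFin (X.erase i) 𝒜₀) := by
    rw [hLHS, hclaim1, hclaim2, hshadow_card]
  have hR : #(∂ ℋℬ) = #(upFin (X.erase i) ℬ) := by
    rw [hRHS, ← hℋℬeq, hshadow_card]
  rw [← hL, ← hR]
  exact hmain

end GotzmannAux

/-- **Proposition.** If `𝒜` is a Gotzmann family of `d`-element subsets of `X` and
`i ∈ X`, then the first part `𝒜₀` of the `i`-decomposition of `𝒜` is a Gotzmann
family of `d`-element subsets of `X \ {i}`. -/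
theorem decompZero_isGotzmann {α : Type*} [DecidableEq α]
    (X : Finset α) (d : ℕ) (𝒜 : Set (Finset α)) (i : α) (hi : i ∈ X)
    (hG : IsGotzmannFamily X d 𝒜) :
    IsGotzmannFamily (X.erase i) d (decompZero i 𝒜) := by
  classical
  obtain ⟨h1, h2⟩ := hG
  have hsub : 𝒜 ⊆ ↑(Finset.powersetCard d X) := fun A hA =>
    Finset.mem_coe.2 (Finset.mem_powersetCard.2 ⟨(h1 A hA).1, (h1 A hA).2⟩)
  have hfin : 𝒜.Finite := Set.Finite.subset (Finset.powersetCard d X).finite_toSet hsub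
  have h𝒜'coe : ↑hfin.toFinset = 𝒜 := hfin.coe_toFinset
  constructor
  · rintro A ⟨hA𝒜, hiA⟩
    exact ⟨Finset.subset_erase.2 ⟨(h1 A hA𝒜).1, hiA⟩, (h1 A hA𝒜).2⟩
  · intro ℬ hℬ hℬcard
    have hℬsub : ℬ ⊆ ↑(Finset.powersetCard d (X.erase i)) := fun B hB =>
      Finset.mem_coe.2 (Finset.mem_powersetCard.2 ⟨(hℬ B hB).1, (hℬ B hB).2⟩)
    have hℬfin : ℬ.Finite := Set.Finite.subset
      (Finset.powersetCard d (X.erase i)).finite_toSet hℬsub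
    have hℬ'coe : ↑hℬfin.toFinset = ℬ := hℬfin.coe_toFinset
    have hdz : decompZero i 𝒜 = ↑(hfin.toFinset.filter fun A => ¬ i ∈ A) := by
      ext A
      simp only [decompZero, Set.mem_setOf_eq, Finset.mem_coe, Finset.mem_filter,
        Set.Finite.mem_toFinset]
    have hminfin : ∀ 𝒞 : Finset (Finset α), (∀ B ∈ 𝒞, B ⊆ X ∧ B.card = d) →
        𝒞.card = hfin.toFinset.card →
        (GotzmannAux.upFin X hfin.toFinset).card ≤ (GotzmannAux.upFin X 𝒞).card := by
      intro 𝒞 h𝒞 h𝒞card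
      have hh := h2 ↑𝒞 (fun B hB => h𝒞 B (Finset.mem_coe.1 hB))
        (by rw [Set.ncard_coe_finset, ← h𝒜'coe, Set.ncard_coe_finset, h𝒞card])
      rw [← h𝒜'coe] at hh
      rwa [GotzmannAux.ncard_upShadowIn, GotzmannAux.ncard_upShadowIn] at hh
    have hℬcard' : hℬfin.toFinset.card = (hfin.toFinset.filter fun A => ¬ i ∈ A).card := by
      rw [← hℬ'coe, Set.ncard_coe_finset, hdz, Set.ncard_coe_finset] at hℬcard
      exact hℬcard
    have hcore := GotzmannAux.coreα X d hfin.toFinset i hi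
      (fun A hA => h1 A (hfin.mem_toFinset.1 hA)) hminfin hℬfin.toFinset
      (fun B hB => hℬ B (hℬfin.mem_toFinset.1 hB)) hℬcard'
    rw [hdz, ← hℬ'coe, GotzmannAux.ncard_upShadowIn, GotzmannAux.ncard_upShadowIn]
    exact hcore
end

section
/- Let 𝒜 be a Gotzmann family of d-element subsets of a finite set X, let i ∈ X, and let (𝒜₀, 𝒜₁) be the i-decomposition of 𝒜. Fix a linear order on X ∖ {i}, and let L₀ and L₁ be the lex segments of d-element and (d−1)-element subsets of X ∖ {i} with |L₀| = |𝒜₀| and |L₁| = |𝒜₁|. Then either 𝒜₁ is a Gotzmann family of (d−1)-element subsets of X ∖ {i}, or ∂⁺L₁ ⊆ L₀ (upper shadow taken in X ∖ {i}). -/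
open Finset

section Basic
variable {α : Type*} [DecidableEq α]
set_option linter.unusedSectionVars false

/-- A family of subsets of a finite set is finite. -/
lemma finite_of_subsets (Z : Finset α) {F : Set (Finset α)}
    (h : ∀ A ∈ F, A ⊆ Z) : F.Finite := by
  apply Set.Finite.subset (Z.powerset : Finset (Finset α)).finite_toSet
  intro A hA
  simpa [Finset.mem_powerset] using h A hA

lemma upShadowIn_subsets {X : Finset α} {F : Set (Finset α)}
    (h : ∀ A ∈ F, A ⊆ X) : ∀ B ∈ upShadowIn X F, B ⊆ X := by
  rintro B ⟨A, hA, x, hx, hxA, rfl⟩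
  exact Finset.insert_subset hx (h A hA)

lemma upShadowIn_card {X : Finset α} {F : Set (Finset α)} {d : ℕ}
    (h : ∀ A ∈ F, A.card = d) : ∀ B ∈ upShadowIn X F, B.card = d + 1 := by
  rintro B ⟨A, hA, x, hx, hxA, rfl⟩
  rw [Finset.card_insert_of_notMem hxA, h A hA]

/-- Splitting a family's cardinality along the `i`-decomposition. -/
lemma ncard_decomp (i : α) {S : Set (Finset α)} (hS : S.Finite) :
    S.ncard = (decompZero i S).ncard + (decompOne i S).ncard := by
  have h0 : decompZero i S = {A ∈ S | i ∉ A} := rfl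
  have h1 : decompOne i S = (fun A => A.erase i) '' {A ∈ S | i ∈ A} := by
    ext B; constructor
    · rintro ⟨A, hA, hiA, rfl⟩; exact ⟨A, ⟨hA, hiA⟩, rfl⟩
    · rintro ⟨A, ⟨hA, hiA⟩, rfl⟩; exact ⟨A, hA, hiA, rfl⟩
  have hinj : Set.InjOn (fun A => A.erase i) {A ∈ S | i ∈ A} := by
    rintro A ⟨-, hA⟩ B ⟨-, hB⟩ hAB
    simp only at hAB
    have : insert i (A.erase i) = insert i (B.erase i) := by rw [hAB]
    rwa [Finset.insert_erase hA, Finset.insert_erase hB] at this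
  rw [h1, Set.ncard_image_of_injOn hinj, h0]
  rw [← Set.ncard_union_eq ?_ (hS.subset (Set.sep_subset _ _)) (hS.subset (Set.sep_subset _ _))]
  · congr 1
    ext A; by_cases h : i ∈ A <;> simp [h]
  · rw [Set.disjoint_left]
    rintro A ⟨-, h1⟩ ⟨-, h2⟩; exact h1 h2

/-- Zero part of the shadow. -/
lemma decompZero_upShadow (i : α) (X : Finset α) (𝒜 : Set (Finset α)) :
    decompZero i (upShadowIn X 𝒜) = upShadowIn (X.erase i) (decompZero i 𝒜) := by
  ext B
  constructor
  · rintro ⟨⟨A, hA, x, hx, hxA, rfl⟩, hiB⟩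
    have hiA : i ∉ A := fun h => hiB (Finset.mem_insert_of_mem h)
    have hxi : x ≠ i := fun h => hiB (by simp [h])
    exact ⟨A, ⟨hA, hiA⟩, x, Finset.mem_erase.2 ⟨hxi, hx⟩, hxA, rfl⟩
  · rintro ⟨A, ⟨hA, hiA⟩, x, hx, hxA, rfl⟩
    obtain ⟨hxi, hxX⟩ := Finset.mem_erase.1 hx
    exact ⟨⟨A, hA, x, hxX, hxA, rfl⟩, by simp [hiA, Ne.symm hxi]⟩

/-- One part of the shadow. -/
lemma decompOne_upShadow (i : α) {X : Finset α} (hi : i ∈ X) (𝒜 : Set (Finset α)) :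
    decompOne i (upShadowIn X 𝒜) =
      decompZero i 𝒜 ∪ upShadowIn (X.erase i) (decompOne i 𝒜) := by
  ext C
  constructor
  · rintro ⟨B, ⟨A, hA, x, hx, hxA, rfl⟩, hiB, rfl⟩
    by_cases hxi : x = i
    · left
      have hiA : i ∉ A := hxi ▸ hxA
      rw [hxi, Finset.erase_insert hiA]
      exact ⟨hA, hiA⟩
    · right
      have hiA : i ∈ A := by
        rcases Finset.mem_insert.1 hiB with h | h
        · exact absurd h.symm hxi
        · exact h
      refine ⟨A.erase i, ⟨A, hA, hiA, rfl⟩, x, Finset.mem_erase.2 ⟨hxi, hx⟩,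
        fun h => hxA (Finset.mem_of_mem_erase h), ?_⟩
      rw [Finset.erase_insert_of_ne hxi]
  · rintro (⟨hA, hiA⟩ | ⟨A₁, ⟨A, hA, hiA, rfl⟩, x, hx, hxA₁, rfl⟩)
    · exact ⟨insert i C, ⟨C, hA, i, hi, hiA, rfl⟩, Finset.mem_insert_self _ _,
        (Finset.erase_insert hiA).symm⟩
    · obtain ⟨hxi, hxX⟩ := Finset.mem_erase.1 hx
      have hxA : x ∉ A := fun h => hxA₁ (Finset.mem_erase.2 ⟨hxi, h⟩)
      exact ⟨insert x A, ⟨A, hA, x, hxX, hxA, rfl⟩,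
        Finset.mem_insert_of_mem hiA, (Finset.erase_insert_of_ne hxi).symm⟩

/-- The lift of a pair of families along `i`. -/
def liftFam (i : α) (F G : Set (Finset α)) : Set (Finset α) :=
  F ∪ (insert i) '' G

lemma decompZero_liftFam (i : α) {F G : Set (Finset α)} (hF : ∀ A ∈ F, i ∉ A) :
    decompZero i (liftFam i F G) = F := by
  ext A
  constructor
  · rintro ⟨(h | ⟨B, hB, rfl⟩), hiA⟩
    · exact h
    · exact absurd (Finset.mem_insert_self _ _) hiA
  · intro h; exact ⟨Or.inl h, hF A h⟩

lemma decompOne_liftFam (i : α) {F G : Set (Finset α)} (hF : ∀ A ∈ F, i ∉ A)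
    (hG : ∀ B ∈ G, i ∉ B) : decompOne i (liftFam i F G) = G := by
  ext C
  constructor
  · rintro ⟨A, (h | ⟨B, hB, rfl⟩), hiA, rfl⟩
    · exact absurd hiA (hF A h)
    · rwa [Finset.erase_insert (hG B hB)]
  · intro h
    exact ⟨insert i C, Or.inr ⟨C, h, rfl⟩, Finset.mem_insert_self _ _,
      (Finset.erase_insert (hG C h)).symm⟩

lemma ncard_liftFam (i : α) {F G : Set (Finset α)} (hF : ∀ A ∈ F, i ∉ A)
    (hG : ∀ B ∈ G, i ∉ B) (hFfin : F.Finite) (hGfin : G.Finite) :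
    (liftFam i F G).ncard = F.ncard + G.ncard := by
  have hinj : Set.InjOn (insert i) G := by
    intro A hA B hB h
    have : (insert i A).erase i = (insert i B).erase i := by rw [h]
    rwa [Finset.erase_insert (hG A hA), Finset.erase_insert (hG B hB)] at this
  rw [liftFam, Set.ncard_union_eq ?_ hFfin (hGfin.image _), Set.ncard_image_of_injOn hinj]
  rw [Set.disjoint_left]
  rintro A hA ⟨B, hB, rfl⟩
  exact hF _ hA (Finset.mem_insert_self _ _)

end Basic

section LexOrder
variable {α : Type*} [DecidableEq α] {Y : Finset α} {r : α → α → Prop}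
set_option linter.unusedSectionVars false

open Classical in
/-- The rank of an element: the number of smaller elements of `Y`. -/
noncomputable def rnk (Y : Finset α) (r : α → α → Prop) (a : α) : ℕ :=
  (Y.filter (fun b => r b a)).card

lemma rnk_lt_rnk (hr : IsLinearOrderOn r Y) {a b : α} (ha : a ∈ Y) (hb : b ∈ Y) :
    r a b ↔ rnk Y r a < rnk Y r b := by
  classical
  obtain ⟨hirr, htrans, htot⟩ := hr
  have main : ∀ x ∈ Y, ∀ y ∈ Y, r x y → rnk Y r x < rnk Y r y := by
    intro x hx y hy hxy
    simp only [rnk]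
    apply Finset.card_lt_card
    constructor
    · intro c hc
      obtain ⟨hcY, hca⟩ := Finset.mem_filter.1 hc
      exact Finset.mem_filter.2 ⟨hcY, htrans c hcY x hx y hy hca hxy⟩
    · intro hsub
      have := hsub (Finset.mem_filter.2 ⟨hx, hxy⟩)
      exact hirr x hx (Finset.mem_filter.1 this).2
  constructor
  · exact main a ha b hb
  · intro hlt
    by_contra hab
    rcases eq_or_ne a b with rfl | hne
    · exact lt_irrefl _ hlt
    · rcases htot a ha b hb hne with h | h
      · exact hab h
      · have := main b hb a ha h; omega

/-- Totality of the lex order on subsets of `Y`. -/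
lemma lexLT_total (hr : IsLinearOrderOn r Y) {A B : Finset α} (hA : A ⊆ Y) (hB : B ⊆ Y)
    (hne : A ≠ B) : lexLT r A B ∨ lexLT r B A := by
  classical
  have hSne : (symmDiff A B).Nonempty := Finset.symmDiff_nonempty.2 hne
  obtain ⟨m, hm, hmin⟩ := Finset.exists_min_image (symmDiff A B) (rnk Y r) hSne
  have hmY : m ∈ Y := by
    rcases Finset.mem_symmDiff.1 hm with ⟨h, -⟩ | ⟨h, -⟩
    exacts [hA h, hB h]
  have key : ∀ y, r y m → (y ∈ A ↔ y ∈ B) := by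
    intro y hym
    by_cases hyY : y ∈ Y
    · by_contra hiff
      have hyS : y ∈ symmDiff A B := by
        rw [Finset.mem_symmDiff]; tauto
      have h1 := hmin y hyS
      have h2 := (rnk_lt_rnk hr hyY hmY).1 hym
      omega
    · constructor <;> intro h <;> [exact absurd (hA h) hyY; exact absurd (hB h) hyY]
  rcases Finset.mem_symmDiff.1 hm with ⟨h1, h2⟩ | ⟨h1, h2⟩
  · exact Or.inl ⟨m, h1, h2, key⟩
  · exact Or.inr ⟨m, h1, h2, fun y hy => (key y hy).symm⟩

lemma lexLT_asymm (hr : IsLinearOrderOn r Y) {A B : Finset α} (hA : A ⊆ Y) (hB : B ⊆ Y)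
    (h1 : lexLT r A B) : ¬ lexLT r B A := by
  obtain ⟨x, hxA, hxB, hx⟩ := h1
  rintro ⟨y, hyB, hyA, hy⟩
  have hxY : x ∈ Y := hA hxA
  have hyY : y ∈ Y := hB hyB
  have hxy : x ≠ y := fun h => hyA (h ▸ hxA)
  rcases hr.2.2 x hxY y hyY hxy with h | h
  · exact hxB ((hy x h).mpr hxA)
  · exact hyA ((hx y h).mpr hyB)

/-- Two lex segments are nested. -/
lemma lexSeg_nested {e : ℕ} {L L' : Set (Finset α)} (hr : IsLinearOrderOn r Y)
    (hL : IsLexSegmentFamily r Y e L) (hL' : IsLexSegmentFamily r Y e L')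
    (h : ¬ L' ⊆ L) : L ⊆ L' := by
  obtain ⟨B', hB'L', hB'L⟩ := Set.not_subset.1 h
  intro B hB
  obtain ⟨hBY, hBe⟩ := hL.1 B hB
  obtain ⟨hB'Y, hB'e⟩ := hL'.1 B' hB'L'
  rcases eq_or_ne B B' with rfl | hne
  · exact absurd hB hB'L
  rcases lexLT_total hr hBY hB'Y hne with h1 | h1
  · exact hL'.2 B' hB'L' B hBY hBe h1
  · exact absurd (hL.2 B hB B' hB'Y hB'e h1) hB'L

/-- Existence of an order-reversing enumeration of `Y`. -/
lemma exists_enum (hr : IsLinearOrderOn r Y) (hY : Y.Nonempty) :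
    ∃ φ : α → Fin Y.card,
      (∀ x ∈ Y, ∀ y ∈ Y, (φ x < φ y ↔ r y x)) ∧ (∀ a : Fin Y.card, ∃ x ∈ Y, φ x = a) := by
  classical
  obtain ⟨y₀, hy₀⟩ := hY
  have hinj : Function.Injective fun a : {x // x ∈ Y} => OrderDual.toDual (rnk Y r ↑a) := by
    rintro ⟨a, ha⟩ ⟨b, hb⟩ hab
    simp only [OrderDual.toDual_inj] at hab
    ext
    by_contra hne
    rcases hr.2.2 a ha b hb hne with h | h
    · have := (rnk_lt_rnk hr ha hb).1 h; omega
    · have := (rnk_lt_rnk hr hb ha).1 h; omega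
  letI lo : LinearOrder {x // x ∈ Y} :=
    LinearOrder.lift' (fun a => OrderDual.toDual (rnk Y r ↑a)) hinj
  have hlt : ∀ a b : {x // x ∈ Y}, a < b ↔ r ↑b ↑a := by
    intro a b
    have h1 : a < b ↔ rnk Y r ↑b < rnk Y r ↑a := by
      rw [lt_iff_le_and_ne]
      constructor
      · rintro ⟨hle, hne⟩
        have h2 : rnk Y r (↑b : α) ≤ rnk Y r ↑a := hle
        rcases lt_or_eq_of_le h2 with h | h
        · exact h
        · exact absurd (hinj (by simpa using h.symm)) hne
      · intro h
        refine ⟨le_of_lt h, fun hab => ?_⟩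
        subst hab; omega
    rw [h1, ← rnk_lt_rnk hr b.2 a.2]
  have hcard : Fintype.card {x // x ∈ Y} = Y.card := Fintype.card_coe Y
  let g : Fin Y.card ≃o {x // x ∈ Y} := Fintype.orderIsoFinOfCardEq _ hcard
  let φ : α → Fin Y.card := fun x => if h : x ∈ Y then g.symm ⟨x, h⟩ else g.symm ⟨y₀, hy₀⟩
  have hφ : ∀ (x : α) (h : x ∈ Y), φ x = g.symm ⟨x, h⟩ := fun x h => dif_pos h
  refine ⟨φ, ?_, ?_⟩
  · intro x hx y hy
    rw [hφ x hx, hφ y hy, ← hlt ⟨x, hx⟩ ⟨y, hy⟩]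
    exact g.symm.lt_iff_lt
  · intro a
    refine ⟨↑(g a), (g a).2, ?_⟩
    rw [hφ _ (g a).2]
    simp

end LexOrder

section Transfer
variable {α : Type*} [DecidableEq α] {Y : Finset α} {r : α → α → Prop} {n : ℕ} {φ : α → Fin n}
set_option linter.unusedSectionVars false

/-- Complemented image of a set under the enumeration. -/
def cmpl (Y : Finset α) (φ : α → Fin n) (A : Finset α) : Finset (Fin n) :=
  (Y \ A).image φ

variable (hr : IsLinearOrderOn r Y)
  (hlt : ∀ x ∈ Y, ∀ y ∈ Y, (φ x < φ y ↔ r y x))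
  (hsurj : ∀ a : Fin n, ∃ x ∈ Y, φ x = a)

include hr hlt

lemma phi_injOn : Set.InjOn φ Y := by
  intro x hx y hy hxy
  by_contra hne
  rcases hr.2.2 x hx y hy hne with h | h
  · exact absurd hxy (ne_of_gt ((hlt y hy x hx).2 h))
  · exact absurd hxy (ne_of_lt ((hlt x hx y hy).2 h))

include hsurj

lemma card_Y_eq : Y.card = n := by
  have himg : Y.image φ = Finset.univ := by
    apply Finset.eq_univ_of_forall
    intro a
    obtain ⟨x, hx, rfl⟩ := hsurj a
    exact Finset.mem_image_of_mem _ hx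
  rw [← Finset.card_image_of_injOn (phi_injOn hr hlt), himg, Finset.card_univ, Fintype.card_fin]

omit hsurj

lemma mem_cmpl {A : Finset α} (hA : A ⊆ Y) {x : α} (hx : x ∈ Y) :
    φ x ∈ cmpl Y φ A ↔ x ∉ A := by
  constructor
  · intro h
    obtain ⟨y, hy, hyx⟩ := Finset.mem_image.1 h
    obtain ⟨hyY, hyA⟩ := Finset.mem_sdiff.1 hy
    rwa [phi_injOn hr hlt hyY hx hyx] at hyA
  · intro h
    exact Finset.mem_image_of_mem _ (Finset.mem_sdiff.2 ⟨hx, h⟩)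

include hsurj

lemma cmpl_card {A : Finset α} (hA : A ⊆ Y) : (cmpl Y φ A).card = n - A.card := by
  rw [cmpl, Finset.card_image_of_injOn ((phi_injOn hr hlt).mono (by
    intro x hx; exact (Finset.mem_sdiff.1 hx).1)),
    Finset.card_sdiff_of_subset hA, card_Y_eq hr hlt hsurj]

omit hsurj

lemma cmpl_inj {A B : Finset α} (hA : A ⊆ Y) (hB : B ⊆ Y) (h : cmpl Y φ A = cmpl Y φ B) :
    A = B := by
  ext x
  by_cases hx : x ∈ Y
  · rw [← not_iff_not, ← mem_cmpl hr hlt hA hx, ← mem_cmpl hr hlt hB hx, h]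
  · constructor <;> intro hh <;> [exact absurd (hA hh) hx; exact absurd (hB hh) hx]

include hsurj

lemma cmpl_surj (t : Finset (Fin n)) :
    ∃ A : Finset α, A ⊆ Y ∧ A.card = n - t.card ∧ cmpl Y φ A = t := by
  set A := Y.filter (fun x => φ x ∉ t) with hAdef
  have hAY : A ⊆ Y := Finset.filter_subset _ _
  have h2 : cmpl Y φ A = t := by
    ext a
    simp only [cmpl, Finset.mem_image, Finset.mem_sdiff, hAdef, Finset.mem_filter]
    constructor
    · rintro ⟨y, ⟨hyY, hy2⟩, rfl⟩
      by_contra hc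
      exact hy2 ⟨hyY, hc⟩
    · intro ha
      obtain ⟨x, hx, rfl⟩ := hsurj a
      exact ⟨x, ⟨hx, fun hc => hc.2 ha⟩, rfl⟩
  have h3 : (Y \ A).card = t.card := by
    rw [← h2, cmpl, Finset.card_image_of_injOn ((phi_injOn hr hlt).mono (by
      intro x hx; exact (Finset.mem_sdiff.1 hx).1))]
  have h4 : (Y \ A).card = Y.card - A.card := Finset.card_sdiff_of_subset hAY
  have h5 : A.card ≤ Y.card := Finset.card_le_card hAY
  have h6 : Y.card = n := card_Y_eq hr hlt hsurj
  exact ⟨A, hAY, by omega, h2⟩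

omit hsurj

lemma cmpl_insert {A : Finset α} (hA : A ⊆ Y) {x : α} (hx : x ∈ Y) (hxA : x ∉ A) :
    cmpl Y φ (insert x A) = (cmpl Y φ A).erase (φ x) := by
  ext b
  simp only [cmpl, Finset.mem_image, Finset.mem_sdiff, Finset.mem_erase, Finset.mem_insert]
  constructor
  · rintro ⟨y, ⟨hyY, hyA⟩, rfl⟩
    push_neg at hyA
    exact ⟨fun h => hyA.1 (phi_injOn hr hlt hyY hx h), y, ⟨hyY, hyA.2⟩, rfl⟩
  · rintro ⟨hb, y, ⟨hyY, hyA⟩, rfl⟩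
    refine ⟨y, ⟨hyY, ?_⟩, rfl⟩
    push_neg
    exact ⟨fun h => hb (by rw [h]), hyA⟩

/-- The central order correspondence, forward direction. -/
lemma colex_lt_of_lexLT {A B : Finset α} (hA : A ⊆ Y) (hB : B ⊆ Y) (hAB : lexLT r A B) :
    toColex (cmpl Y φ A) < toColex (cmpl Y φ B) := by
  obtain ⟨x, hxA, hxB, hmin⟩ := hAB
  have hxY : x ∈ Y := hA hxA
  rw [Colex.toColex_lt_toColex_iff_exists_forall_lt]
  refine ⟨φ x, (mem_cmpl hr hlt hB hxY).2 hxB, by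
    rw [mem_cmpl hr hlt hA hxY]; simpa using hxA, ?_⟩
  intro b hbA hbB
  obtain ⟨y, hy, rfl⟩ := Finset.mem_image.1 hbA
  obtain ⟨hyY, hyA⟩ := Finset.mem_sdiff.1 hy
  have hyB : y ∈ B := by
    by_contra hyB
    exact hbB ((mem_cmpl hr hlt hB hyY).2 hyB)
  have hxy : y ≠ x := fun h => hxB (h ▸ hyB)
  have : ¬ r y x := fun h => hyA ((hmin y h).2 hyB)
  rcases hr.2.2 x hxY y hyY (Ne.symm hxy) with h | h
  · exact (hlt y hyY x hxY).2 h
  · exact absurd h this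


/-- The central order correspondence. -/
lemma lexLT_iff_colex {A B : Finset α} (hA : A ⊆ Y) (hB : B ⊆ Y) :
    lexLT r A B ↔ toColex (cmpl Y φ A) < toColex (cmpl Y φ B) := by
  refine ⟨colex_lt_of_lexLT hr hlt hA hB, fun h => ?_⟩
  have hne : A ≠ B := by rintro rfl; exact lt_irrefl _ h
  rcases lexLT_total hr hA hB hne with h1 | h1
  · exact h1
  · exact absurd (colex_lt_of_lexLT hr hlt hB hA h1) (lt_asymm h)

/-- Image of a family under `cmpl`. -/
noncomputable def famC (Y : Finset α) (φ : α → Fin n) (F : Set (Finset α)) (hF : F.Finite) :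
    Finset (Finset (Fin n)) :=
  hF.toFinset.image (cmpl Y φ)

omit hsurj

lemma card_famC {F : Set (Finset α)} (hmem : ∀ A ∈ F, A ⊆ Y) (hF : F.Finite) :
    (famC Y φ F hF).card = F.ncard := by
  rw [famC, Finset.card_image_of_injOn, Set.ncard_eq_toFinset_card F hF]
  intro A hA B hB h
  simp only [Finset.mem_coe, Set.Finite.mem_toFinset] at hA hB
  exact cmpl_inj hr hlt (hmem A hA) (hmem B hB) h

lemma mem_famC {F : Set (Finset α)} (hmem : ∀ A ∈ F, A ⊆ Y) (hF : F.Finite)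
    {A : Finset α} (hA : A ⊆ Y) : cmpl Y φ A ∈ famC Y φ F hF ↔ A ∈ F := by
  rw [famC, Finset.mem_image]
  constructor
  · rintro ⟨B, hB, h⟩
    rw [Set.Finite.mem_toFinset] at hB
    rwa [← cmpl_inj hr hlt (hmem B hB) hA h]
  · intro h
    exact ⟨A, (Set.Finite.mem_toFinset _).2 h, rfl⟩

lemma shadow_famC {F : Set (Finset α)} (hmem : ∀ A ∈ F, A ⊆ Y) (hF : F.Finite)
    (hS : (upShadowIn Y F).Finite) :
    Finset.shadow (famC Y φ F hF) = famC Y φ (upShadowIn Y F) hS := by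
  have hSmem : ∀ B ∈ upShadowIn Y F, B ⊆ Y := by
    rintro B ⟨A, hA, x, hx, hxA, rfl⟩
    exact Finset.insert_subset hx (hmem A hA)
  ext t
  rw [Finset.mem_shadow_iff]
  constructor
  · rintro ⟨s, hs, a, ha, rfl⟩
    rw [famC, Finset.mem_image] at hs
    obtain ⟨A, hA, rfl⟩ := hs
    rw [Set.Finite.mem_toFinset] at hA
    obtain ⟨x, hxYA, rfl⟩ := Finset.mem_image.1 ha
    obtain ⟨hxY, hxA⟩ := Finset.mem_sdiff.1 hxYA
    rw [← cmpl_insert hr hlt (hmem A hA) hxY hxA]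
    rw [mem_famC hr hlt hSmem hS (Finset.insert_subset hxY (hmem A hA))]
    exact ⟨A, hA, x, hxY, hxA, rfl⟩
  · intro ht
    rw [famC, Finset.mem_image] at ht
    obtain ⟨B, hB, rfl⟩ := ht
    rw [Set.Finite.mem_toFinset] at hB
    obtain ⟨A, hA, x, hxY, hxA, rfl⟩ := hB
    refine ⟨cmpl Y φ A, ?_, φ x, ?_, ?_⟩
    · rw [mem_famC hr hlt hmem hF (hmem A hA)]; exact hA
    · exact (mem_cmpl hr hlt (hmem A hA) hxY).2 hxA
    · rw [← cmpl_insert hr hlt (hmem A hA) hxY hxA]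

include hsurj

lemma initseg_of_lexSeg {e : ℕ} {L : Set (Finset α)} (hL : IsLexSegmentFamily r Y e L)
    (hfin : L.Finite) : Finset.Colex.IsInitSeg (famC Y φ L hfin) (n - e) := by
  constructor
  · intro s hs
    rw [famC, Finset.mem_coe, Finset.mem_image] at hs
    obtain ⟨B, hB, rfl⟩ := hs
    rw [Set.Finite.mem_toFinset] at hB
    obtain ⟨hBY, hBe⟩ := hL.1 B hB
    rw [cmpl_card hr hlt hsurj hBY, hBe]
  · rintro s t hs ⟨hlt', hte⟩
    rw [famC, Finset.mem_image] at hs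
    obtain ⟨B, hB, rfl⟩ := hs
    rw [Set.Finite.mem_toFinset] at hB
    obtain ⟨hBY, hBe⟩ := hL.1 B hB
    have heN : e ≤ n := by
      have := card_Y_eq hr hlt hsurj
      have := Finset.card_le_card hBY
      omega
    obtain ⟨A, hAY, hAcard, rfl⟩ := cmpl_surj hr hlt hsurj t
    have hAe : A.card = e := by omega
    have : lexLT r A B := (lexLT_iff_colex hr hlt hAY hBY).2 hlt'
    have hAL : A ∈ L := hL.2 B hB A hAY hAe this
    rw [mem_famC hr hlt (fun C hC => (hL.1 C hC).1) hfin hAY]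
    exact hAL

lemma lexSeg_of_initseg {e : ℕ} {L : Set (Finset α)}
    (hmem : ∀ B ∈ L, B ⊆ Y ∧ B.card = e) (hfin : L.Finite)
    (hIS : Finset.Colex.IsInitSeg (famC Y φ L hfin) (n - e)) :
    IsLexSegmentFamily r Y e L := by
  refine ⟨hmem, ?_⟩
  intro B hB A hAY hAe hlex
  have hBY := (hmem B hB).1
  have h1 : toColex (cmpl Y φ A) < toColex (cmpl Y φ B) :=
    (lexLT_iff_colex hr hlt hAY hBY).1 hlex
  have h2 : (cmpl Y φ A).card = n - e := by rw [cmpl_card hr hlt hsurj hAY, hAe]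
  have h3 : cmpl Y φ B ∈ famC Y φ L hfin :=
    (mem_famC hr hlt (fun C hC => (hmem C hC).1) hfin hBY).2 hB
  have := hIS.2 h3 ⟨h1, h2⟩
  rwa [mem_famC hr hlt (fun C hC => (hmem C hC).1) hfin hAY] at this

end Transfer

section KKup
variable {α : Type*} [DecidableEq α] {Y : Finset α} {r : α → α → Prop}
set_option linter.unusedSectionVars false

lemma upShadowIn_empty (F : Set (Finset α)) : upShadowIn (∅ : Finset α) F = ∅ := by
  ext B
  simp [upShadowIn]

/-- Kruskal–Katona for the upper shadow: lex segments minimise the upper shadow. -/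
lemma kk_up (hr : IsLinearOrderOn r Y) {e : ℕ} {L ℬ : Set (Finset α)}
    (hL : IsLexSegmentFamily r Y e L)
    (hB : ∀ B ∈ ℬ, B ⊆ Y ∧ B.card = e) (hcard : L.ncard ≤ ℬ.ncard) :
    (upShadowIn Y L).ncard ≤ (upShadowIn Y ℬ).ncard := by
  rcases Y.eq_empty_or_nonempty with rfl | hY
  · rw [upShadowIn_empty]
    simp
  obtain ⟨φ, hlt, hsurj⟩ := exists_enum hr hY
  have hLY : ∀ A ∈ L, A ⊆ Y := fun A hA => (hL.1 A hA).1
  have hBY : ∀ A ∈ ℬ, A ⊆ Y := fun A hA => (hB A hA).1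
  have hLfin : L.Finite := finite_of_subsets Y hLY
  have hBfin : ℬ.Finite := finite_of_subsets Y hBY
  have hLSY : ∀ C ∈ upShadowIn Y L, C ⊆ Y := by
    rintro C ⟨A, hA, x, hx, hxA, rfl⟩; exact Finset.insert_subset hx (hLY A hA)
  have hBSY : ∀ C ∈ upShadowIn Y ℬ, C ⊆ Y := by
    rintro C ⟨A, hA, x, hx, hxA, rfl⟩; exact Finset.insert_subset hx (hBY A hA)
  have hLS : (upShadowIn Y L).Finite := finite_of_subsets Y hLSY
  have hBS : (upShadowIn Y ℬ).Finite := finite_of_subsets Y hBSY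
  have hsized : Set.Sized (Y.card - e) (↑(famC Y φ ℬ hBfin) : Set (Finset (Fin Y.card))) := by
    intro s hs
    rw [famC, Finset.mem_coe, Finset.mem_image] at hs
    obtain ⟨A, hA, rfl⟩ := hs
    rw [Set.Finite.mem_toFinset] at hA
    rw [cmpl_card hr hlt hsurj (hB A hA).1, (hB A hA).2]
  have hcards : (famC Y φ L hLfin).card ≤ (famC Y φ ℬ hBfin).card := by
    rw [card_famC hr hlt hLY hLfin, card_famC hr hlt hBY hBfin]
    exact hcard
  have hkk := Finset.kruskal_katona hsized hcards (initseg_of_lexSeg hr hlt hsurj hL hLfin)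
  rwa [shadow_famC hr hlt hLY hLfin hLS, shadow_famC hr hlt hBY hBfin hBS,
    card_famC hr hlt hLSY hLS, card_famC hr hlt hBSY hBS] at hkk

/-- The upper shadow of a lex segment is a lex segment. -/
lemma upShadow_lexSeg (hr : IsLinearOrderOn r Y) {e : ℕ} {L : Set (Finset α)}
    (hL : IsLexSegmentFamily r Y e L) :
    IsLexSegmentFamily r Y (e + 1) (upShadowIn Y L) := by
  have hLY : ∀ A ∈ L, A ⊆ Y := fun A hA => (hL.1 A hA).1
  have hmem : ∀ B ∈ upShadowIn Y L, B ⊆ Y ∧ B.card = e + 1 := by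
    rintro B ⟨A, hA, x, hx, hxA, rfl⟩
    exact ⟨Finset.insert_subset hx (hLY A hA),
      by rw [Finset.card_insert_of_notMem hxA, (hL.1 A hA).2]⟩
  rcases Y.eq_empty_or_nonempty with rfl | hY
  · rw [upShadowIn_empty]
    exact ⟨fun B hB => absurd hB (Set.notMem_empty B), fun B hB => absurd hB (Set.notMem_empty B)⟩
  obtain ⟨φ, hlt, hsurj⟩ := exists_enum hr hY
  have hLfin : L.Finite := finite_of_subsets Y hLY
  have hSY : ∀ C ∈ upShadowIn Y L, C ⊆ Y := fun C hC => (hmem C hC).1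
  have hLS : (upShadowIn Y L).Finite := finite_of_subsets Y hSY
  have hIS := (initseg_of_lexSeg hr hlt hsurj hL hLfin).shadow
  rw [shadow_famC hr hlt hLY hLfin hLS] at hIS
  have harith : Y.card - e - 1 = Y.card - (e + 1) := by omega
  rw [harith] at hIS
  exact lexSeg_of_initseg hr hlt hsurj hmem hLS hIS

end KKup



/-- **Lemma.** Let `𝒜` be Gotzmann in `X`, `i ∈ X`, and let `L₀, L₁` be the lex
segments (for a linear order on `X \ {i}`) with the same cardinalities as the parts
`𝒜₀, 𝒜₁` of the `i`-decomposition of `𝒜`.  Then either `𝒜₁` is Gotzmann in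
`X \ {i}`, or `∂⁺L₁ ⊆ L₀`. -/

theorem decompOne_gotzmann_or_shadow_le {α : Type*} [DecidableEq α]
    (X : Finset α) (d : ℕ) (𝒜 : Set (Finset α)) (i : α) (hi : i ∈ X)
    (hG : IsGotzmannFamily X d 𝒜)
    (r : α → α → Prop) (hr : IsLinearOrderOn r (X.erase i))
    (L₀ L₁ : Set (Finset α))
    (hL₀ : IsLexSegmentFamily r (X.erase i) d L₀)
    (hL₀c : L₀.ncard = (decompZero i 𝒜).ncard)
    (hL₁ : IsLexSegmentFamily r (X.erase i) (d - 1) L₁)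
    (hL₁c : L₁.ncard = (decompOne i 𝒜).ncard) :
    IsGotzmannFamily (X.erase i) (d - 1) (decompOne i 𝒜) ∨
      upShadowIn (X.erase i) L₁ ⊆ L₀ := by
  classical
  set Y := X.erase i with hYdef
  have hYX : Y ⊆ X := Finset.erase_subset _ _
  -- the degenerate case d = 0
  rcases Nat.eq_zero_or_pos d with rfl | hd
  · left
    have h1 : decompOne i 𝒜 = ∅ := by
      ext B
      simp only [Set.mem_empty_iff_false, iff_false]
      rintro ⟨A, hA, hiA, rfl⟩
      have hA0 : A = ∅ := Finset.card_eq_zero.1 (hG.1 A hA).2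
      subst hA0
      simp at hiA
    rw [h1]
    refine ⟨fun A h => absurd h (Set.notMem_empty _), fun ℬ hB hcard => ?_⟩
    have : upShadowIn Y (∅ : Set (Finset α)) = ∅ := by
      ext B; simp [upShadowIn]
    rw [this]
    simp
  by_cases hsub : upShadowIn Y L₁ ⊆ L₀
  · exact Or.inr hsub
  left
  -- membership facts
  have h𝒜0 : ∀ A ∈ decompZero i 𝒜, (A ⊆ Y ∧ A.card = d) ∧ i ∉ A := by
    rintro A ⟨hA, hiA⟩
    exact ⟨⟨fun x hx => Finset.mem_erase.2 ⟨fun h => hiA (h ▸ hx), (hG.1 A hA).1 hx⟩,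
      (hG.1 A hA).2⟩, hiA⟩
  have h𝒜1 : ∀ B ∈ decompOne i 𝒜, B ⊆ Y ∧ B.card = d - 1 := by
    rintro B ⟨A, hA, hiA, rfl⟩
    constructor
    · intro x hx
      obtain ⟨hxi, hxA⟩ := Finset.mem_erase.1 hx
      exact Finset.mem_erase.2 ⟨hxi, (hG.1 A hA).1 hxA⟩
    · rw [Finset.card_erase_of_mem hiA, (hG.1 A hA).2]
  refine ⟨h𝒜1, ?_⟩
  intro ℬ hB hBcard
  -- finiteness facts
  have h𝒜fin : 𝒜.Finite := finite_of_subsets X (fun A hA => (hG.1 A hA).1)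
  have h𝒜0fin : (decompZero i 𝒜).Finite := h𝒜fin.subset (Set.sep_subset _ _)
  have h𝒜1fin : (decompOne i 𝒜).Finite := finite_of_subsets Y (fun B hB => (h𝒜1 B hB).1)
  have hL₀mem := hL₀.1
  have hL₁mem := hL₁.1
  have hL₀fin : L₀.Finite := finite_of_subsets Y (fun A hA => (hL₀mem A hA).1)
  have hL₁fin : L₁.Finite := finite_of_subsets Y (fun A hA => (hL₁mem A hA).1)
  -- the upper shadow of L₁ is a lex segment of d-subsets containing L₀
  have hshadL : IsLexSegmentFamily r Y d (upShadowIn Y L₁) := by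
    have := upShadow_lexSeg hr hL₁
    have harith : d - 1 + 1 = d := by omega
    rwa [harith] at this
  have hL0sub : L₀ ⊆ upShadowIn Y L₁ := lexSeg_nested hr hL₀ hshadL hsub
  -- the compressed family
  set 𝒞 := liftFam i L₀ L₁ with h𝒞def
  have hiL₀ : ∀ A ∈ L₀, i ∉ A := fun A hA h =>
    (Finset.mem_erase.1 ((hL₀mem A hA).1 h)).1 rfl
  have hiL₁ : ∀ B ∈ L₁, i ∉ B := fun B hB h =>
    (Finset.mem_erase.1 ((hL₁mem B hB).1 h)).1 rfl
  have h𝒞mem : ∀ C ∈ 𝒞, C ⊆ X ∧ C.card = d := by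
    rintro C (hC | ⟨B, hB, rfl⟩)
    · exact ⟨(hL₀mem C hC).1.trans hYX, (hL₀mem C hC).2⟩
    · refine ⟨Finset.insert_subset hi ((hL₁mem B hB).1.trans hYX), ?_⟩
      rw [Finset.card_insert_of_notMem (hiL₁ B hB), (hL₁mem B hB).2]
      omega
  have h𝒞card : 𝒞.ncard = 𝒜.ncard := by
    rw [h𝒞def, ncard_liftFam i hiL₀ hiL₁ hL₀fin hL₁fin, ncard_decomp i h𝒜fin, hL₀c, hL₁c]
  -- Gotzmann comparison
  have hGot : (upShadowIn X 𝒜).ncard ≤ (upShadowIn X 𝒞).ncard := hG.2 𝒞 h𝒞mem h𝒞card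
  -- decompose both shadows
  have hS𝒜fin : (upShadowIn X 𝒜).Finite :=
    finite_of_subsets X (upShadowIn_subsets (fun A hA => (hG.1 A hA).1))
  have hS𝒞fin : (upShadowIn X 𝒞).Finite :=
    finite_of_subsets X (upShadowIn_subsets (fun A hA => (h𝒞mem A hA).1))
  have eq𝒜 : (upShadowIn X 𝒜).ncard =
      (upShadowIn Y (decompZero i 𝒜)).ncard +
        (decompZero i 𝒜 ∪ upShadowIn Y (decompOne i 𝒜)).ncard := by
    rw [ncard_decomp i hS𝒜fin, decompZero_upShadow, decompOne_upShadow i hi]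
  have eq𝒞 : (upShadowIn X 𝒞).ncard =
      (upShadowIn Y L₀).ncard + (upShadowIn Y L₁).ncard := by
    rw [ncard_decomp i hS𝒞fin, decompZero_upShadow, decompOne_upShadow i hi,
      h𝒞def, decompZero_liftFam i hiL₀, decompOne_liftFam i hiL₀ hiL₁,
      Set.union_eq_self_of_subset_left hL0sub]
  -- Kruskal–Katona twice
  have hkk1 : (upShadowIn Y L₀).ncard ≤ (upShadowIn Y (decompZero i 𝒜)).ncard :=
    kk_up hr hL₀ (fun A hA => (h𝒜0 A hA).1) (le_of_eq hL₀c)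
  have hkk2 : (upShadowIn Y L₁).ncard ≤ (upShadowIn Y ℬ).ncard :=
    kk_up hr hL₁ hB (by rw [hL₁c, hBcard])
  -- put everything together
  have hsub1 : (upShadowIn Y (decompOne i 𝒜)).ncard ≤
      (decompZero i 𝒜 ∪ upShadowIn Y (decompOne i 𝒜)).ncard := by
    exact Set.ncard_le_ncard Set.subset_union_right
      (h𝒜0fin.union (finite_of_subsets Y (upShadowIn_subsets (fun B hB => (h𝒜1 B hB).1))))
  omega
end
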